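/- arXiv:1605.07095 — 6 statements merged into one kernel-verified Lean document; each statement's English description precedes it below -/
import Mathlib

section
/- Suppose h_τ and h are positive self-adjoint operators with Hilbert-Schmidt inverses such that ‖h_τ^{-1} - h^{-1}‖_{HS} → 0 as τ → ∞. Then ‖(τ(e^{h_τ/τ} - 1))^{-1} - h_τ^{-1}‖_{HS} → 0 as τ → ∞. -/
open Filter

private lemma key_bounds {τ l : ℝ} (hτ : 0 < τ) (hl : 0 < l) :
    0 ≤ 1 / l - 1 / (τ * (Real.exp (l / τ) - 1)) ∧
      1 / l - 1 / (τ * (Real.exp (l / τ) - 1)) ≤ 1 / τ := by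
  set x : ℝ := l / τ with hx
  have hx0 : 0 < x := div_pos hl hτ
  have he : x + 1 ≤ Real.exp x := Real.add_one_le_exp x
  have hexp1 : 0 < Real.exp x - 1 := by linarith
  have hG : 0 < τ * (Real.exp x - 1) := mul_pos hτ hexp1
  have hlx : l = τ * x := by rw [hx]; field_simp
  have hGl : l ≤ τ * (Real.exp x - 1) := by
    rw [hlx]; exact mul_le_mul_of_nonneg_left (by linarith) hτ.le
  constructor
  · have := one_div_le_one_div_of_le hl hGl
    linarith
  · have h1 : 1 - x ≤ Real.exp (-x) := by linarith [Real.add_one_le_exp (-x)]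
    have h2 : Real.exp (-x) * Real.exp x = 1 := by
      rw [← Real.exp_add]; simp
    have hkey : Real.exp x - 1 ≤ x * Real.exp x := by
      nlinarith [Real.exp_pos x]
    have heq : 1 / l - 1 / (τ * (Real.exp x - 1)) =
        (τ * (Real.exp x - 1) - l) / (l * (τ * (Real.exp x - 1))) := by
      field_simp
    rw [heq, div_le_div_iff₀ (mul_pos hl hG) hτ]
    have h3 : Real.exp x - 1 - x ≤ x * (Real.exp x - 1) := by nlinarith
    rw [hlx]
    nlinarith [mul_le_mul_of_nonneg_left h3 (mul_pos hτ hτ).le]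

/-- Convergence of the quantum Green function to the inverse one-body Hamiltonian in
Hilbert-Schmidt norm (expressed spectrally): if the (positive) eigenvalues `lamτ τ k` of `h_τ`
and `lam k` of `h` have square-summable inverses and
`‖h_τ⁻¹ - h⁻¹‖²_{𝔖²} = ∑_k (1/lamτ τ k - 1/lam k)² → 0`, then
`‖(τ(e^{h_τ/τ} - 1))⁻¹ - h_τ⁻¹‖²_{𝔖²} → 0` as `τ → ∞`. -/
theorem stmt5 (lamτ : ℝ → ℕ → ℝ) (lam : ℕ → ℝ)
    (hposτ : ∀ τ : ℝ, 0 < τ → ∀ k, 0 < lamτ τ k) (hpos : ∀ k, 0 < lam k)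
    (hHS : Summable fun k => (1 / lam k) ^ 2)
    (hHSτ : ∀ τ : ℝ, 0 < τ → Summable fun k => (1 / lamτ τ k) ^ 2)
    (hconv : Tendsto (fun τ : ℝ => ∑' k, (1 / lamτ τ k - 1 / lam k) ^ 2) atTop (nhds 0)) :
    Tendsto
      (fun τ : ℝ => ∑' k, (1 / (τ * (Real.exp (lamτ τ k / τ) - 1)) - 1 / lamτ τ k) ^ 2)
      atTop (nhds 0) := by
  set F : ℝ → ℕ → ℝ := fun τ k =>
    (1 / (τ * (Real.exp (lamτ τ k / τ) - 1)) - 1 / lamτ τ k) ^ 2 with hF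
  set D : ℝ → ℕ → ℝ := fun τ k => (1 / lamτ τ k - 1 / lam k) ^ 2 with hD
  set M : ℝ → ℕ → ℝ := fun τ k => min (2 * (1 / lam k) ^ 2) (1 / τ ^ 2) with hM
  have hMnn : ∀ τ k, 0 ≤ M τ k := by
    intro τ k
    exact le_min (by positivity) (by positivity)
  -- per-term bounds for τ > 0
  have hbound : ∀ τ : ℝ, 0 < τ → ∀ k, F τ k ≤ 2 * D τ k + M τ k := by
    intro τ hτ k
    obtain ⟨h0, h1⟩ := key_bounds hτ (hposτ τ hτ k)
    have hFa : F τ k = (1 / lamτ τ k - 1 / (τ * (Real.exp (lamτ τ k / τ) - 1))) ^ 2 := by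
      simp only [hF]; ring
    have hGnn : 0 ≤ 1 / (τ * (Real.exp (lamτ τ k / τ) - 1)) := by
      have hx0 : 0 < lamτ τ k / τ := div_pos (hposτ τ hτ k) hτ
      have hge := Real.add_one_le_exp (lamτ τ k / τ)
      have hexp1 : 0 < Real.exp (lamτ τ k / τ) - 1 := by linarith
      positivity
    have hle1 : F τ k ≤ (1 / lamτ τ k) ^ 2 := by
      rw [hFa]
      have hla : 0 < 1 / lamτ τ k := by have := hposτ τ hτ k; positivity
      nlinarith
    have hle2 : F τ k ≤ 1 / τ ^ 2 := by
      rw [hFa]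
      have h4 : (1:ℝ) / τ ^ 2 = (1 / τ) ^ 2 := by ring
      rw [h4]
      nlinarith
    have hsq : (1 / lamτ τ k) ^ 2 ≤ 2 * D τ k + 2 * (1 / lam k) ^ 2 := by
      simp only [hD]
      nlinarith [sq_nonneg (1 / lamτ τ k - 2 * (1 / lam k))]
    have hDnn : 0 ≤ D τ k := sq_nonneg _
    rcases le_total (2 * (1 / lam k) ^ 2) (1 / τ ^ 2) with h | h
    · have hMe : M τ k = 2 * (1 / lam k) ^ 2 := min_eq_left h
      rw [hMe]; linarith
    · have hMe : M τ k = 1 / τ ^ 2 := min_eq_right h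
      rw [hMe]; linarith
  have hFnn : ∀ τ k, 0 ≤ F τ k := fun τ k => sq_nonneg _
  -- summability
  have hMsum : ∀ τ : ℝ, Summable (M τ) :=
    fun τ => Summable.of_nonneg_of_le (hMnn τ) (fun k => min_le_left _ _) (hHS.mul_left 2)
  have hDsum : ∀ τ : ℝ, 0 < τ → Summable (D τ) := by
    intro τ hτ
    apply Summable.of_nonneg_of_le (fun k => sq_nonneg _)
      (fun k => ?_) (((hHSτ τ hτ).mul_left 2).add (hHS.mul_left 2))
    show (1 / lamτ τ k - 1 / lam k) ^ 2 ≤ _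
    nlinarith [sq_nonneg (1 / lamτ τ k + 1 / lam k)]
  have hFsum : ∀ τ : ℝ, 0 < τ → Summable (F τ) := by
    intro τ hτ
    apply Summable.of_nonneg_of_le (hFnn τ) (fun k => ?_)
      (((hDsum τ hτ).mul_left 2).add (hMsum τ))
    exact hbound τ hτ k
  -- the upper bound tends to 0
  have hMtend : Tendsto (fun τ : ℝ => ∑' k, M τ k) atTop (nhds 0) := by
    have h0 : (0:ℝ) = ∑' k : ℕ, (0:ℝ) := by simp
    rw [h0]
    apply tendsto_tsum_of_dominated_convergence (bound := fun k => 2 * (1 / lam k) ^ 2)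
      (hHS.mul_left 2)
    · intro k
      apply squeeze_zero' (Eventually.of_forall fun τ => hMnn τ k)
        (Eventually.of_forall fun τ => min_le_right _ _)
      have : Tendsto (fun τ : ℝ => τ ^ 2) atTop atTop := tendsto_pow_atTop two_ne_zero
      simpa [one_div, Pi.inv_def] using this.inv_tendsto_atTop
    · filter_upwards with τ k
      rw [Real.norm_of_nonneg (hMnn τ k)]
      exact min_le_left _ _
  have hUtend : Tendsto (fun τ : ℝ => ∑' k, (2 * D τ k + M τ k)) atTop (nhds 0) := by
    have hsplit : ∀ᶠ τ : ℝ in atTop, ∑' k, (2 * D τ k + M τ k)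
        = 2 * (∑' k, D τ k) + ∑' k, M τ k := by
      filter_upwards [eventually_gt_atTop (0:ℝ)] with τ hτ
      rw [Summable.tsum_add ((hDsum τ hτ).mul_left 2) (hMsum τ), tsum_mul_left]
    have h2 : Tendsto (fun τ : ℝ => 2 * (∑' k, D τ k) + ∑' k, M τ k) atTop (nhds 0) := by
      have h3 := (hconv.const_mul 2).add hMtend
      norm_num at h3
      simpa only [hD, one_div] using h3
    exact Tendsto.congr' (hsplit.mono fun τ h => h.symm) h2
  -- squeeze
  apply tendsto_of_tendsto_of_tendsto_of_le_of_le' tendsto_const_nhds hUtend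
  · filter_upwards with τ
    exact tsum_nonneg (hFnn τ)
  · filter_upwards [eventually_gt_atTop (0:ℝ)] with τ hτ
    exact Summable.tsum_le_tsum (hbound τ hτ) (hFsum τ hτ) (((hDsum τ hτ).mul_left 2).add (hMsum τ))
end

section
/- Suppose h_τ and h are positive self-adjoint operators with Hilbert-Schmidt inverses such that ‖h_τ^{-1} - h^{-1}‖_{HS} → 0 as τ → ∞. Then (1/τ)·tr[(τ(e^{h_τ/τ} - 1))^{-1}] → 0 as τ → ∞. -/
open Filter

/-- If the (positive) eigenvalues `lamτ τ k` of `h_τ` and `lam k` of `h` have square-summable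
inverses and `‖h_τ⁻¹ - h⁻¹‖²_{𝔖²} = ∑_k (1/lamτ τ k - 1/lam k)² → 0`, then the trace of the
quantum Green function grows slower than `τ`:
`(1/τ) · tr (τ(e^{h_τ/τ} - 1))⁻¹ → 0` as `τ → ∞`. -/
theorem stmt6 (lamτ : ℝ → ℕ → ℝ) (lam : ℕ → ℝ)
    (hposτ : ∀ τ : ℝ, 0 < τ → ∀ k, 0 < lamτ τ k) (hpos : ∀ k, 0 < lam k)
    (hHS : Summable fun k => (1 / lam k) ^ 2)
    (hHSτ : ∀ τ : ℝ, 0 < τ → Summable fun k => (1 / lamτ τ k) ^ 2)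
    (hconv : Tendsto (fun τ : ℝ => ∑' k, (1 / lamτ τ k - 1 / lam k) ^ 2) atTop (nhds 0)) :
    Tendsto
      (fun τ : ℝ => (1 / τ) * ∑' k, 1 / (τ * (Real.exp (lamτ τ k / τ) - 1)))
      atTop (nhds 0) := by
  -- Quadratic lower bound for exp
  have hquad : ∀ x : ℝ, 0 ≤ x → x + x ^ 2 / 4 ≤ Real.exp x - 1 := by
    intro x hx
    have h := Real.add_one_le_exp (x / 2)
    have h2 : Real.exp x = Real.exp (x / 2) * Real.exp (x / 2) := by
      rw [← Real.exp_add]; ring_nf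
    nlinarith [Real.exp_pos (x / 2)]
  set g : ℝ → ℕ → ℝ := fun τ k => (1 / τ) * (1 / (τ * (Real.exp (lamτ τ k / τ) - 1))) with hgdef
  -- basic facts for τ > 0
  have hden : ∀ τ : ℝ, 0 < τ → ∀ k,
      lamτ τ k ≤ τ * (Real.exp (lamτ τ k / τ) - 1) ∧
      (lamτ τ k) ^ 2 / (4 * τ) ≤ τ * (Real.exp (lamτ τ k / τ) - 1) := by
    intro τ hτ k
    have hlam := hposτ τ hτ k
    have hx : 0 ≤ lamτ τ k / τ := (div_pos hlam hτ).le
    have h := hquad _ hx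
    have h1 : τ * (lamτ τ k / τ + (lamτ τ k / τ) ^ 2 / 4) ≤
        τ * (Real.exp (lamτ τ k / τ) - 1) := by
      exact mul_le_mul_of_nonneg_left h hτ.le
    have heq : τ * (lamτ τ k / τ + (lamτ τ k / τ) ^ 2 / 4)
        = lamτ τ k + (lamτ τ k) ^ 2 / (4 * τ) := by
      field_simp
    rw [heq] at h1
    have hsq : 0 ≤ (lamτ τ k) ^ 2 / (4 * τ) := by positivity
    constructor <;> nlinarith
  have hgpos : ∀ τ : ℝ, 0 < τ → ∀ k, 0 < g τ k := by
    intro τ hτ k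
    have h := (hden τ hτ k).1
    have hlam := hposτ τ hτ k
    have hd : 0 < τ * (Real.exp (lamτ τ k / τ) - 1) := lt_of_lt_of_le hlam h
    positivity
  -- Bound 1 : g τ k ≤ 4 * (1/lamτ τ k)^2
  have hb1 : ∀ τ : ℝ, 0 < τ → ∀ k, g τ k ≤ 4 * (1 / lamτ τ k) ^ 2 := by
    intro τ hτ k
    have h := (hden τ hτ k).2
    have hlam := hposτ τ hτ k
    have hsq : 0 < (lamτ τ k) ^ 2 / (4 * τ) := by positivity
    have hd : 0 < τ * (Real.exp (lamτ τ k / τ) - 1) := lt_of_lt_of_le hsq h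
    have hinv : 1 / (τ * (Real.exp (lamτ τ k / τ) - 1)) ≤ (4 * τ) / (lamτ τ k) ^ 2 := by
      rw [div_le_div_iff₀ hd (by positivity)]
      calc 1 * (lamτ τ k) ^ 2 = (4 * τ) * ((lamτ τ k) ^ 2 / (4 * τ)) := by
            field_simp
        _ ≤ (4 * τ) * (τ * (Real.exp (lamτ τ k / τ) - 1)) := by
            exact mul_le_mul_of_nonneg_left h (by positivity)
    have : g τ k ≤ (1 / τ) * ((4 * τ) / (lamτ τ k) ^ 2) :=
      mul_le_mul_of_nonneg_left hinv (by positivity)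
    calc g τ k ≤ (1 / τ) * ((4 * τ) / (lamτ τ k) ^ 2) := this
      _ = 4 * (1 / lamτ τ k) ^ 2 := by field_simp
  -- Bound 2 : g τ k ≤ (1/lamτ τ k) / τ
  have hb2 : ∀ τ : ℝ, 0 < τ → ∀ k, g τ k ≤ (1 / lamτ τ k) / τ := by
    intro τ hτ k
    have h := (hden τ hτ k).1
    have hlam := hposτ τ hτ k
    have hd : 0 < τ * (Real.exp (lamτ τ k / τ) - 1) := lt_of_lt_of_le hlam h
    have hinv : 1 / (τ * (Real.exp (lamτ τ k / τ) - 1)) ≤ 1 / lamτ τ k :=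
      one_div_le_one_div_of_le hlam h
    have : g τ k ≤ (1 / τ) * (1 / lamτ τ k) :=
      mul_le_mul_of_nonneg_left hinv (by positivity)
    calc g τ k ≤ (1 / τ) * (1 / lamτ τ k) := this
      _ = (1 / lamτ τ k) / τ := by ring
  -- summability of g
  have hgsum : ∀ τ : ℝ, 0 < τ → Summable (g τ) := by
    intro τ hτ
    exact Summable.of_nonneg_of_le (fun k => (hgpos τ hτ k).le) (hb1 τ hτ)
      ((hHSτ τ hτ).mul_left 4)
  -- summability of δ²
  have hδsum : ∀ τ : ℝ, 0 < τ → Summable (fun k => (1 / lamτ τ k - 1 / lam k) ^ 2) := by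
    intro τ hτ
    have hbound : ∀ k, (1 / lamτ τ k - 1 / lam k) ^ 2 ≤
        2 * (1 / lamτ τ k) ^ 2 + 2 * (1 / lam k) ^ 2 := by
      intro k; nlinarith [sq_nonneg (1 / lamτ τ k + 1 / lam k)]
    exact Summable.of_nonneg_of_le (fun k => sq_nonneg _) hbound
      (((hHSτ τ hτ).mul_left 2).add (hHS.mul_left 2))
  -- rewrite target as tsum of g
  have hF : ∀ τ : ℝ, (1 / τ) * ∑' k, 1 / (τ * (Real.exp (lamτ τ k / τ) - 1)) = ∑' k, g τ k := by
    intro τ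
    rw [hgdef, tsum_mul_left]
  rw [Metric.tendsto_atTop]
  intro ε hε
  have hε32 : (0 : ℝ) < ε / 32 := by linarith
  -- choose N for the tail of b²
  have htail := tendsto_sum_nat_add (fun k => (1 / lam k) ^ 2)
  obtain ⟨N, hN⟩ := Metric.tendsto_atTop.mp htail (ε / 32) hε32
  have hNtail : ∑' k, (1 / lam (k + N)) ^ 2 < ε / 32 := by
    have := hN N le_rfl
    rwa [Real.dist_eq, sub_zero, abs_of_nonneg (tsum_nonneg fun k => sq_nonneg _)] at this
  set C : ℝ := ∑ k ∈ Finset.range N, (1 / lam k + 1) with hC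
  have hCnn : 0 ≤ C := Finset.sum_nonneg fun k _ => by
    have := hpos k; positivity
  -- eventual smallness of δ²-sum
  have hD : ∀ᶠ τ : ℝ in atTop,
      (∑' k, (1 / lamτ τ k - 1 / lam k) ^ 2) < min (ε / 32) 1 :=
    hconv.eventually_lt_const (lt_min hε32 one_pos)
  have hfinal : ∀ᶠ τ : ℝ in atTop,
      dist ((1 / τ) * ∑' k, 1 / (τ * (Real.exp (lamτ τ k / τ) - 1))) 0 < ε := by
    filter_upwards [hD, eventually_gt_atTop (max 0 (2 * C / ε + 1))] with τ hDτ hτbig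
    have hτ : 0 < τ := lt_of_le_of_lt (le_max_left _ _) hτbig
    have hτC : C / τ < ε / 2 := by
      have h1 : 2 * C / ε + 1 < τ := lt_of_le_of_lt (le_max_right _ _) hτbig
      rw [div_lt_iff₀ hτ]
      have h2 : ε / 2 * (2 * C / ε + 1) = C + ε / 2 := by field_simp
      nlinarith [mul_lt_mul_of_pos_left h1 (half_pos hε)]
    have hDτ1 : (∑' k, (1 / lamτ τ k - 1 / lam k) ^ 2) < 1 :=
      lt_of_lt_of_le hDτ (min_le_right _ _)
    have hDτε : (∑' k, (1 / lamτ τ k - 1 / lam k) ^ 2) < ε / 32 :=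
      lt_of_lt_of_le hDτ (min_le_left _ _)
    -- |1/lamτ - 1/lam| < 1 for each k
    have hδk : ∀ k, 1 / lamτ τ k ≤ 1 / lam k + 1 := by
      intro k
      have h1 : (1 / lamτ τ k - 1 / lam k) ^ 2 ≤ ∑' k, (1 / lamτ τ k - 1 / lam k) ^ 2 :=
        Summable.le_tsum (hδsum τ hτ) k fun _ _ => sq_nonneg _
      nlinarith [h1.trans_lt hDτ1]
    -- split the sum
    have hgsumτ := hgsum τ hτ
    have hsplit := Summable.sum_add_tsum_nat_add (f := g τ) N hgsumτ
    -- finite part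
    have hfin : (∑ k ∈ Finset.range N, g τ k) ≤ C / τ := by
      rw [hC, Finset.sum_div]
      apply Finset.sum_le_sum
      intro k _
      calc g τ k ≤ (1 / lamτ τ k) / τ := hb2 τ hτ k
        _ ≤ (1 / lam k + 1) / τ := by gcongr; exact hδk k
    -- tail part
    have htailb : (∑' k, g τ (k + N)) ≤
        ∑' k, (8 * (1 / lam (k + N)) ^ 2 + 8 * (1 / lamτ τ (k + N) - 1 / lam (k + N)) ^ 2) := by
      apply Summable.tsum_le_tsum
      · intro k
        have h1 := hb1 τ hτ (k + N)
        nlinarith [sq_nonneg (1 / lamτ τ (k + N) - 2 * (1 / lam (k + N)))]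
      · exact (summable_nat_add_iff N).2 hgsumτ
      · exact (((summable_nat_add_iff N).2 hHS).mul_left 8).add
          (((summable_nat_add_iff N).2 (hδsum τ hτ)).mul_left 8)
    have htailδ : (∑' k, (1 / lamτ τ (k + N) - 1 / lam (k + N)) ^ 2) ≤
        ∑' k, (1 / lamτ τ k - 1 / lam k) ^ 2 := by
      have h := Summable.sum_add_tsum_nat_add (f := fun k => (1 / lamτ τ k - 1 / lam k) ^ 2) N
        (hδsum τ hτ)
      have hnn : 0 ≤ ∑ k ∈ Finset.range N, (1 / lamτ τ k - 1 / lam k) ^ 2 :=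
        Finset.sum_nonneg fun k _ => sq_nonneg _
      linarith
    have htail2 : (∑' k, g τ (k + N)) ≤ ε / 2 := by
      have hsum8 : (∑' k, (8 * (1 / lam (k + N)) ^ 2
          + 8 * (1 / lamτ τ (k + N) - 1 / lam (k + N)) ^ 2))
          = 8 * (∑' k, (1 / lam (k + N)) ^ 2)
            + 8 * (∑' k, (1 / lamτ τ (k + N) - 1 / lam (k + N)) ^ 2) := by
        rw [Summable.tsum_add (((summable_nat_add_iff N).2 hHS).mul_left 8)
          (((summable_nat_add_iff N).2 (hδsum τ hτ)).mul_left 8), tsum_mul_left, tsum_mul_left]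
      calc (∑' k, g τ (k + N)) ≤ _ := htailb
        _ = 8 * (∑' k, (1 / lam (k + N)) ^ 2)
            + 8 * (∑' k, (1 / lamτ τ (k + N) - 1 / lam (k + N)) ^ 2) := hsum8
        _ ≤ 8 * (ε / 32) + 8 * (ε / 32) := by
            have := htailδ.trans_lt hDτε
            nlinarith [hNtail]
        _ = ε / 2 := by ring
    have hFτ : (∑' k, g τ k) < ε := by
      rw [← hsplit]
      calc (∑ k ∈ Finset.range N, g τ k) + ∑' k, g τ (k + N)
          ≤ C / τ + ε / 2 := add_le_add hfin htail2
        _ < ε / 2 + ε / 2 := by linarith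
        _ = ε := by ring
    rw [hF τ, Real.dist_eq, sub_zero,
      abs_of_nonneg (tsum_nonneg fun k => (hgpos τ hτ k).le)]
    exact hFτ
  exact eventually_atTop.mp hfinal
end

section
/- Suppose h_τ and h are positive self-adjoint operators with Hilbert-Schmidt inverses and ‖h_τ^{-1} - h^{-1}‖_{HS} → 0 as τ → ∞. Then, uniformly in t ∈ (0, 1), one has (t/τ)·‖e^{-t h_τ/τ}‖_{HS} → 0 as τ → ∞. -/
open Filter

/-- `x² ≤ eˣ` for `x ≥ 0`. -/
lemma stmt7_sq_le_exp (x : ℝ) (hx : 0 ≤ x) : x ^ 2 ≤ Real.exp x := by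
  have h1 : x / 4 + 1 ≤ Real.exp (x / 4) := Real.add_one_le_exp _
  have h2 : Real.exp x = Real.exp (x / 4) ^ 4 := by
    rw [← Real.exp_nat_mul]
    norm_num
    ring_nf
  have h3 : x ≤ Real.exp (x / 4) ^ 2 := by nlinarith [sq_nonneg (1 - x / 4)]
  have h4 : x ^ 2 ≤ (Real.exp (x / 4) ^ 2) ^ 2 := by
    have := pow_le_pow_left₀ hx h3 2
    simpa using this
  rw [h2]
  calc x ^ 2 ≤ (Real.exp (x / 4) ^ 2) ^ 2 := h4
    _ = Real.exp (x / 4) ^ 4 := by ring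

/-- `e^{-x} ≤ (1/x)²` for `x > 0`. -/
lemma stmt7_exp_neg_le (x : ℝ) (hx : 0 < x) : Real.exp (-x) ≤ (1 / x) ^ 2 := by
  have h := stmt7_sq_le_exp x hx.le
  have hx2 : (0:ℝ) < x ^ 2 := by positivity
  rw [Real.exp_neg, div_pow, one_pow, one_div]
  exact inv_anti₀ hx2 h

set_option maxHeartbeats 1000000 in
/-- If the (positive) eigenvalues `lamτ τ k` of `h_τ` and `lam k` of `h` have square-summable
inverses and `∑_k (1/lamτ τ k - 1/lam k)² → 0`, then, uniformly in `t ∈ (0,1)`,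
`(t/τ) · ‖e^{-t h_τ/τ}‖_{𝔖²} → 0` as `τ → ∞`, where
`‖e^{-t h_τ/τ}‖_{𝔖²} = (∑_k e^{-2 t lamτ τ k/τ})^{1/2}`. -/
theorem stmt7 (lamτ : ℝ → ℕ → ℝ) (lam : ℕ → ℝ)
    (hposτ : ∀ τ : ℝ, 0 < τ → ∀ k, 0 < lamτ τ k) (hpos : ∀ k, 0 < lam k)
    (hHS : Summable fun k => (1 / lam k) ^ 2)
    (hHSτ : ∀ τ : ℝ, 0 < τ → Summable fun k => (1 / lamτ τ k) ^ 2)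
    (hconv : Tendsto (fun τ : ℝ => ∑' k, (1 / lamτ τ k - 1 / lam k) ^ 2) atTop (nhds 0)) :
    TendstoUniformlyOn
      (fun τ : ℝ => fun t : ℝ =>
        (t / τ) * Real.sqrt (∑' k, Real.exp (-(2 * t * lamτ τ k / τ))))
      (fun _ => 0) atTop (Set.Ioo 0 1) := by
  rw [Metric.tendstoUniformlyOn_iff]
  intro ε hε
  set ε' : ℝ := ε / 2 with hε'def
  have hε' : 0 < ε' := by positivity
  -- choose a finite set of indices catching most of the mass of ∑ (1/lam k)²
  obtain ⟨F, hF⟩ : ∃ F : Finset ℕ, ∑' k : {k // k ∉ F}, (1 / lam (k : ℕ)) ^ 2 < ε' ^ 2 := by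
    have h := (tendsto_order.1 (tendsto_tsum_compl_atTop_zero
      (fun k => (1 / lam k) ^ 2))).2 _ (by positivity : (0:ℝ) < ε' ^ 2)
    exact h.exists
  -- eventually in τ
  have h1 : ∀ᶠ τ : ℝ in atTop, ∑' k, (1 / lamτ τ k - 1 / lam k) ^ 2 < ε' ^ 2 :=
    (tendsto_order.1 hconv).2 _ (by positivity)
  have h2 : ∀ᶠ τ : ℝ in atTop, (1:ℝ) ≤ τ := eventually_ge_atTop 1
  have h3 : ∀ᶠ τ : ℝ in atTop, (F.card : ℝ) / ε' ^ 2 ≤ τ := eventually_ge_atTop _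
  filter_upwards [h1, h2, h3] with τ hδ hτ1 hτF t ht
  obtain ⟨ht0, ht1⟩ := ht
  have hτ0 : (0:ℝ) < τ := lt_of_lt_of_le one_pos hτ1
  have hlamt : ∀ k, 0 < lamτ τ k := hposτ τ hτ0
  -- summability facts
  have hSτ : Summable fun k => (1 / lamτ τ k) ^ 2 := hHSτ τ hτ0
  have hSdiff : Summable fun k => (1 / lamτ τ k - 1 / lam k) ^ 2 := by
    apply Summable.of_nonneg_of_le (fun k => sq_nonneg _)
      (fun k => ?_) ((hSτ.add hHS).mul_left 2)
    nlinarith [sq_nonneg (1 / lamτ τ k + 1 / lam k)]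
  -- pointwise exponential bound
  have hexp_le : ∀ k, Real.exp (-(2 * t * lamτ τ k / τ)) ≤
      (τ / (2 * t)) ^ 2 * (1 / lamτ τ k) ^ 2 := by
    intro k
    have hx : 0 < 2 * t * lamτ τ k / τ := div_pos (mul_pos (by positivity) (hlamt k)) hτ0
    have h := stmt7_exp_neg_le _ hx
    calc Real.exp (-(2 * t * lamτ τ k / τ)) ≤ (1 / (2 * t * lamτ τ k / τ)) ^ 2 := h
      _ = (τ / (2 * t)) ^ 2 * (1 / lamτ τ k) ^ 2 := by
          field_simp
  have hsum_exp : Summable fun k => Real.exp (-(2 * t * lamτ τ k / τ)) :=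
    Summable.of_nonneg_of_le (fun k => (Real.exp_pos _).le) hexp_le
      (hSτ.mul_left _)
  set A : ℝ := ∑' k, Real.exp (-(2 * t * lamτ τ k / τ)) with hAdef
  have hAnn : 0 ≤ A := tsum_nonneg fun k => (Real.exp_pos _).le
  -- split the sum
  have hsplit : A = (∑ k ∈ F, Real.exp (-(2 * t * lamτ τ k / τ)))
      + ∑' k : ↑(↑F : Set ℕ)ᶜ, Real.exp (-(2 * t * lamτ τ (k : ℕ) / τ)) :=
    (Summable.sum_add_tsum_compl hsum_exp).symm
  -- bound the finite part
  have hfin : (∑ k ∈ F, Real.exp (-(2 * t * lamτ τ k / τ))) ≤ F.card := by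
    calc (∑ k ∈ F, Real.exp (-(2 * t * lamτ τ k / τ))) ≤ ∑ _k ∈ F, (1:ℝ) := by
          apply Finset.sum_le_sum
          intro k _
          rw [Real.exp_le_one_iff]
          have : 0 < 2 * t * lamτ τ k / τ := div_pos (mul_pos (by positivity) (hlamt k)) hτ0
          linarith
      _ = F.card := by simp
  -- bound the tail part
  have htail1 : ∑' k : ↑(↑F : Set ℕ)ᶜ, Real.exp (-(2 * t * lamτ τ (k : ℕ) / τ))
      ≤ (τ / (2 * t)) ^ 2 * ∑' k : ↑(↑F : Set ℕ)ᶜ, (1 / lamτ τ (k : ℕ)) ^ 2 := by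
    rw [← tsum_mul_left]
    exact Summable.tsum_le_tsum (fun k => hexp_le k)
      (hsum_exp.subtype _) ((hSτ.mul_left _).subtype _)
  have htail2 : ∑' k : ↑(↑F : Set ℕ)ᶜ, (1 / lamτ τ (k : ℕ)) ^ 2
      ≤ 2 * (∑' k, (1 / lamτ τ k - 1 / lam k) ^ 2)
        + 2 * ∑' k : ↑(↑F : Set ℕ)ᶜ, (1 / lam (k : ℕ)) ^ 2 := by
    have hptw : ∀ k : ↑(↑F : Set ℕ)ᶜ, (1 / lamτ τ (k : ℕ)) ^ 2
        ≤ 2 * (1 / lamτ τ (k : ℕ) - 1 / lam (k : ℕ)) ^ 2 + 2 * (1 / lam (k : ℕ)) ^ 2 := by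
      intro k
      nlinarith [sq_nonneg (1 / lamτ τ (k : ℕ) - 2 * (1 / lam (k : ℕ)))]
    calc ∑' k : ↑(↑F : Set ℕ)ᶜ, (1 / lamτ τ (k : ℕ)) ^ 2
        ≤ ∑' k : ↑(↑F : Set ℕ)ᶜ, (2 * (1 / lamτ τ (k : ℕ) - 1 / lam (k : ℕ)) ^ 2
            + 2 * (1 / lam (k : ℕ)) ^ 2) := by
          apply Summable.tsum_le_tsum hptw (hSτ.subtype _)
          exact (((hSdiff.mul_left 2).add (hHS.mul_left 2)).subtype _)
      _ = 2 * (∑' k : ↑(↑F : Set ℕ)ᶜ, (1 / lamτ τ (k : ℕ) - 1 / lam (k : ℕ)) ^ 2)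
            + 2 * ∑' k : ↑(↑F : Set ℕ)ᶜ, (1 / lam (k : ℕ)) ^ 2 := by
          have e1 : Summable (fun k : ↑(↑F : Set ℕ)ᶜ =>
              2 * (1 / lamτ τ (k : ℕ) - 1 / lam (k : ℕ)) ^ 2) := (hSdiff.subtype _).mul_left 2
          have e2 : Summable (fun k : ↑(↑F : Set ℕ)ᶜ =>
              2 * (1 / lam (k : ℕ)) ^ 2) := (hHS.subtype _).mul_left 2
          rw [Summable.tsum_add e1 e2, tsum_mul_left, tsum_mul_left]
      _ ≤ 2 * (∑' k, (1 / lamτ τ k - 1 / lam k) ^ 2)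
            + 2 * ∑' k : ↑(↑F : Set ℕ)ᶜ, (1 / lam (k : ℕ)) ^ 2 := by
          have := Summable.tsum_subtype_le (fun k => (1 / lamτ τ k - 1 / lam k) ^ 2)
            ((↑F : Set ℕ)ᶜ) (fun k => sq_nonneg _) hSdiff
          linarith
  have hFcompl : ∑' k : ↑(↑F : Set ℕ)ᶜ, (1 / lam (k : ℕ)) ^ 2 < ε' ^ 2 := hF
  -- combine
  have htail : ∑' k : ↑(↑F : Set ℕ)ᶜ, (1 / lamτ τ (k : ℕ)) ^ 2 ≤ 4 * ε' ^ 2 := by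
    linarith [htail2, hδ, hFcompl]
  have hA : A ≤ (F.card : ℝ) + (τ / (2 * t)) ^ 2 * (4 * ε' ^ 2) := by
    rw [hsplit]
    have h := htail1
    have h2 : (τ / (2 * t)) ^ 2 * (∑' k : ↑(↑F : Set ℕ)ᶜ, (1 / lamτ τ (k : ℕ)) ^ 2)
        ≤ (τ / (2 * t)) ^ 2 * (4 * ε' ^ 2) := by
      apply mul_le_mul_of_nonneg_left htail (by positivity)
    linarith
  -- final numeric estimate
  have hcard : (F.card : ℝ) ≤ τ * ε' ^ 2 := by
    rw [div_le_iff₀ (by positivity)] at hτF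
    linarith [hτF]
  have hsq : ((t / τ) * Real.sqrt A) ^ 2 ≤ 2 * ε' ^ 2 := by
    rw [mul_pow, Real.sq_sqrt hAnn]
    have hb : (t / τ) ^ 2 * A ≤ (t / τ) ^ 2 * ((F.card : ℝ) + (τ / (2 * t)) ^ 2 * (4 * ε' ^ 2)) :=
      mul_le_mul_of_nonneg_left hA (by positivity)
    have hc : (t / τ) ^ 2 * ((τ / (2 * t)) ^ 2 * (4 * ε' ^ 2)) = ε' ^ 2 := by
      field_simp
      ring
    have hd : (t / τ) ^ 2 * (F.card : ℝ) ≤ ε' ^ 2 := by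
      have ht2 : t ^ 2 ≤ 1 := by nlinarith
      have hτ2 : τ ≤ τ ^ 2 := by nlinarith
      have : (t / τ) ^ 2 * (F.card : ℝ) = t ^ 2 * ((F.card : ℝ) / τ ^ 2) := by
        field_simp
      rw [this]
      have h5 : (F.card : ℝ) / τ ^ 2 ≤ ε' ^ 2 := by
        rw [div_le_iff₀ (by positivity)]
        calc (F.card : ℝ) ≤ τ * ε' ^ 2 := hcard
          _ ≤ ε' ^ 2 * τ ^ 2 := by nlinarith
      calc t ^ 2 * ((F.card : ℝ) / τ ^ 2) ≤ 1 * ε' ^ 2 := by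
            apply mul_le_mul ht2 h5 (by positivity) one_pos.le
        _ = ε' ^ 2 := by ring
    calc (t / τ) ^ 2 * A
        ≤ (t / τ) ^ 2 * ((F.card : ℝ) + (τ / (2 * t)) ^ 2 * (4 * ε' ^ 2)) := hb
      _ = (t / τ) ^ 2 * (F.card : ℝ) + (t / τ) ^ 2 * ((τ / (2 * t)) ^ 2 * (4 * ε' ^ 2)) := by
          ring
      _ ≤ ε' ^ 2 + ε' ^ 2 := by rw [hc]; linarith
      _ = 2 * ε' ^ 2 := by ring
  have hfnn : 0 ≤ (t / τ) * Real.sqrt A := by positivity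
  have hfinal : (t / τ) * Real.sqrt A < ε := by
    nlinarith [hsq, hfnn, hε, hε']
  rw [dist_comm, Real.dist_0_eq_abs, abs_of_nonneg hfnn]
  exact hfinal
end

section
/- Suppose h_τ and h are positive self-adjoint operators with Hilbert-Schmidt inverses and ‖h_τ^{-1} - h^{-1}‖_{HS} → 0. Then, uniformly in t ∈ (-1, 1), (1+t)·‖ e^{-t h_τ/τ}/(τ(e^{h_τ/τ}-1)) - h_τ^{-1} ‖_{HS} → 0 as τ → ∞. -/
open Filter

set_option maxHeartbeats 1000000

open Filter

private lemma key_bound {t τ lam : ℝ} (ht1 : -1 < t) (ht2 : t < 1)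
    (hτ : 0 < τ) (hl : 0 < lam) :
    |(1 + t) * (Real.exp (-(t * lam / τ)) / (τ * (Real.exp (lam / τ) - 1)) - 1 / lam)|
      ≤ min (4 / τ) (3 / lam) := by
  set x : ℝ := lam / τ with hxdef
  have hx : 0 < x := div_pos hl hτ
  set s : ℝ := 1 + t with hsdef
  have hs0 : 0 < s := by simp [hsdef]; linarith
  have hs2 : s ≤ 2 := by simp [hsdef]; linarith
  have hlx : lam = τ * x := by rw [hxdef]; field_simp
  have harg : -(t * lam / τ) = -(t * x) := by rw [hxdef]; ring
  have hA0 : 0 < Real.exp (-(s * x)) := Real.exp_pos _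
  have hA1 : Real.exp (-(s * x)) ≤ 1 := by
    rw [Real.exp_le_one_iff]; nlinarith
  have hid : Real.exp (-(t * x)) = Real.exp x * Real.exp (-(s * x)) := by
    rw [← Real.exp_add, hsdef]; ring_nf
  have hE := Real.add_one_le_exp x
  have hex : 0 < Real.exp x - 1 := by nlinarith
  have hD : 0 < τ * (Real.exp x - 1) := mul_pos hτ hex
  have hcore : x * Real.exp x ≤ (1 + x) * (Real.exp x - 1) := by nlinarith
  have hprodx : Real.exp (-x) * Real.exp x = 1 := by rw [← Real.exp_add]; simp
  have hcore2 : Real.exp x - 1 ≤ x * Real.exp x := by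
    nlinarith [Real.add_one_le_exp (-x), Real.exp_pos x]
  have hprods : Real.exp (-(s * x)) * Real.exp (s * x) = 1 := by rw [← Real.exp_add]; simp
  have hsxA : s * x * Real.exp (-(s * x)) ≤ 1 := by
    nlinarith [Real.add_one_le_exp (s * x), mul_nonneg hA0.le
      (show (0:ℝ) ≤ Real.exp (s * x) - s * x by nlinarith [Real.add_one_le_exp (s * x)])]
  have hE1 : 1 - s * x ≤ Real.exp (-(s * x)) := by
    nlinarith [Real.add_one_le_exp (-(s * x))]
  set P : ℝ := Real.exp (-(t * x)) / (τ * (Real.exp x - 1)) with hPdef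
  have hPub : P ≤ (1 + x) / lam := by
    rw [hPdef, div_le_div_iff₀ hD hl, hid, hlx]
    nlinarith [Real.exp_pos x, mul_pos hτ hx, mul_le_mul_of_nonneg_left hcore hτ.le,
      mul_le_mul_of_nonneg_left hA1 (mul_nonneg (mul_nonneg hτ.le hx.le) (Real.exp_pos x).le)]
  have hPlb : Real.exp (-(s * x)) / lam ≤ P := by
    rw [hPdef, div_le_div_iff₀ hl hD, hid, hlx]
    nlinarith [mul_le_mul_of_nonneg_left hcore2 (mul_nonneg hτ.le hA0.le)]
  have hPub2 : s * P ≤ 3 / lam := by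
    rw [hPdef, ← mul_div_assoc, div_le_div_iff₀ hD hl, hid, hlx]
    have hsA : s * Real.exp (-(s * x)) ≤ 2 := by
      have := mul_le_mul hs2 hA1 hA0.le (by norm_num : (0:ℝ) ≤ 2)
      linarith
    have hfac : s * Real.exp (-(s * x)) * (1 + x) ≤ 3 := by
      have hr : s * Real.exp (-(s * x)) * (1 + x)
          = s * Real.exp (-(s * x)) + s * x * Real.exp (-(s * x)) := by ring
      linarith
    have h5 : s * Real.exp (-(s * x)) * (x * Real.exp x) ≤ 3 * (Real.exp x - 1) := by
      calc s * Real.exp (-(s * x)) * (x * Real.exp x)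
          ≤ s * Real.exp (-(s * x)) * ((1 + x) * (Real.exp x - 1)) :=
            mul_le_mul_of_nonneg_left hcore (mul_nonneg hs0.le hA0.le)
        _ = s * Real.exp (-(s * x)) * (1 + x) * (Real.exp x - 1) := by ring
        _ ≤ 3 * (Real.exp x - 1) := mul_le_mul_of_nonneg_right hfac hex.le
    nlinarith [mul_le_mul_of_nonneg_left h5 hτ.le]
  -- now assemble
  clear_value x s P
  rw [harg, ← hPdef]
  have h1x : (1 + x) / lam = 1 / lam + 1 / τ := by rw [hlx]; field_simp
  have hsx : (s * x) / lam = s / τ := by rw [hlx]; field_simp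
  have hub : P - 1 / lam ≤ 1 / τ := by
    have := hPub; rw [h1x] at this; linarith
  have hlb1 : -(2 / τ) ≤ P - 1 / lam := by
    have h := hPlb
    have h2 : (1 - s * x) / lam ≤ Real.exp (-(s * x)) / lam := by gcongr
    have h3 : (1 - s * x) / lam = 1 / lam - s / τ := by
      rw [sub_div, hsx]
    have hsτ : s / τ ≤ 2 / τ := by gcongr
    nlinarith [h2.trans h]
  have hlb2 : -(1 / lam) ≤ P - 1 / lam := by
    have h2 : (0:ℝ) ≤ Real.exp (-(s * x)) / lam := div_nonneg hA0.le hl.le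
    nlinarith [h2.trans hPlb]
  have habs : |s * (P - 1 / lam)| = s * |P - 1 / lam| := by
    rw [abs_mul, abs_of_pos hs0]
  rw [habs]
  apply le_min
  · have : |P - 1 / lam| ≤ 2 / τ := abs_le.mpr ⟨hlb1, by
      have : (1:ℝ)/τ ≤ 2/τ := by gcongr <;> norm_num
      linarith⟩
    calc s * |P - 1/lam| ≤ 2 * (2/τ) := by
          apply mul_le_mul hs2 this (abs_nonneg _) (by norm_num)
      _ = 4 / τ := by ring
  · rw [← habs]
    apply abs_le.mpr
    have hil : 0 < 1 / lam := one_div_pos.mpr hl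
    constructor
    · have h1 : s * (-(1/lam)) ≤ s * (P - 1/lam) := mul_le_mul_of_nonneg_left hlb2 hs0.le
      have h2 : s * (1/lam) ≤ 2 * (1/lam) := mul_le_mul_of_nonneg_right hs2 hil.le
      have h3 : s * (-(1/lam)) = -(s * (1/lam)) := by ring
      have h4 : (3:ℝ)/lam = 3 * (1/lam) := by ring
      linarith
    · have h1 : s * (P - 1/lam) = s * P - s * (1/lam) := by ring
      have h2 : (0:ℝ) ≤ s * (1/lam) := mul_nonneg hs0.le hil.le
      linarith [hPub2]
/-- If the (positive) eigenvalues `lamτ τ k` of `h_τ` and `lam k` of `h` have square-summable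
inverses and `∑_k (1/lamτ τ k - 1/lam k)² → 0`, then, uniformly in `t ∈ (-1,1)`,
`(1+t) · ‖e^{-t h_τ/τ}/(τ(e^{h_τ/τ}-1)) - h_τ⁻¹‖_{𝔖²} → 0` as `τ → ∞`, the Hilbert-Schmidt
norm being expressed spectrally. -/
theorem stmt8 (lamτ : ℝ → ℕ → ℝ) (lam : ℕ → ℝ)
    (hposτ : ∀ τ : ℝ, 0 < τ → ∀ k, 0 < lamτ τ k) (hpos : ∀ k, 0 < lam k)
    (hHS : Summable fun k => (1 / lam k) ^ 2)
    (hHSτ : ∀ τ : ℝ, 0 < τ → Summable fun k => (1 / lamτ τ k) ^ 2)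
    (hconv : Tendsto (fun τ : ℝ => ∑' k, (1 / lamτ τ k - 1 / lam k) ^ 2) atTop (nhds 0)) :
    TendstoUniformlyOn
      (fun τ : ℝ => fun t : ℝ =>
        (1 + t) * Real.sqrt (∑' k,
          (Real.exp (-(t * lamτ τ k / τ)) / (τ * (Real.exp (lamτ τ k / τ) - 1))
            - 1 / lamτ τ k) ^ 2))
      (fun _ => 0) atTop (Set.Ioo (-1) 1) := by
  rw [Metric.tendstoUniformlyOn_iff]
  intro ε hε
  have hε2 : 0 < ε ^ 2 / 4 := by positivity
  -- choose N with small tail of ∑ (1/lam)^2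
  obtain ⟨N, hN⟩ : ∃ N : ℕ, 18 * (∑' k, (1 / lam (k + N)) ^ 2) < ε ^ 2 / 4 := by
    have htail : Tendsto (fun i : ℕ => ∑' k, (1 / lam (k + i)) ^ 2) atTop (nhds 0) :=
      tendsto_sum_nat_add (fun k => (1 / lam k) ^ 2)
    have h18 : Tendsto (fun i : ℕ => 18 * ∑' k, (1 / lam (k + i)) ^ 2) atTop (nhds 0) := by
      simpa using htail.const_mul (18 : ℝ)
    exact (h18.eventually_lt_const hε2).exists
  have h1 : ∀ᶠ τ : ℝ in atTop,
      18 * (∑' k, (1 / lamτ τ k - 1 / lam k) ^ 2) < ε ^ 2 / 4 :=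
    (hconv.const_mul (18 : ℝ)).eventually_lt_const (by simpa using hε2)
  have h2 : ∀ᶠ τ : ℝ in atTop, (N : ℝ) * (16 / τ ^ 2) < ε ^ 2 / 4 := by
    have hp : Tendsto (fun τ : ℝ => (N : ℝ) * (16 / τ ^ 2)) atTop (nhds 0) := by
      have := (tendsto_pow_atTop (n := 2) two_ne_zero).comp tendsto_id (α := ℝ)
      simpa using ((tendsto_const_nhds (x := (16:ℝ)) (f := atTop)).div_atTop
        (by simpa using this)).const_mul (N : ℝ)
    exact hp.eventually_lt_const hε2
  filter_upwards [h1, h2, eventually_gt_atTop (0 : ℝ)] with τ hδ hNτ hτ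
  intro t ht
  obtain ⟨ht1, ht2⟩ := ht
  have ht0 : (0 : ℝ) ≤ 1 + t := by linarith
  set E : ℕ → ℝ := fun k =>
    Real.exp (-(t * lamτ τ k / τ)) / (τ * (Real.exp (lamτ τ k / τ) - 1)) - 1 / lamτ τ k
    with hEdef
  have hkey : ∀ k, |(1 + t) * E k| ≤ min (4 / τ) (3 / lamτ τ k) := fun k =>
    key_bound ht1 ht2 hτ (hposτ τ hτ k)
  have hlτ : ∀ k, 0 < lamτ τ k := hposτ τ hτ
  -- summability facts
  have hsumτ : Summable fun k => (1 / lamτ τ k) ^ 2 := hHSτ τ hτ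
  have hsq9 : ∀ k, ((1 + t) * E k) ^ 2 ≤ 9 * (1 / lamτ τ k) ^ 2 := by
    intro k
    have h := (hkey k).trans (min_le_right _ _)
    have h2 : |(1 + t) * E k| ^ 2 ≤ (3 / lamτ τ k) ^ 2 :=
      pow_le_pow_left₀ (abs_nonneg _) h 2
    calc ((1 + t) * E k) ^ 2 = |(1 + t) * E k| ^ 2 := (sq_abs _).symm
      _ ≤ (3 / lamτ τ k) ^ 2 := h2
      _ = 9 * (1 / lamτ τ k) ^ 2 := by
          have hne := (hlτ k).ne'
          field_simp
          norm_num
  have hsumE : Summable fun k => ((1 + t) * E k) ^ 2 :=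
    Summable.of_nonneg_of_le (fun k => sq_nonneg _) hsq9 (hsumτ.mul_left 9)
  have hdsum : Summable fun k => (1 / lamτ τ k - 1 / lam k) ^ 2 := by
    apply Summable.of_nonneg_of_le (fun k => sq_nonneg _) (fun k => ?_)
      ((hsumτ.mul_left 2).add (hHS.mul_left 2))
    nlinarith [sq_nonneg (1 / lamτ τ k + 1 / lam k)]
  -- split the sum at N
  have hsplit := Summable.sum_add_tsum_nat_add N hsumE
  have hhead : ∑ i ∈ Finset.range N, ((1 + t) * E i) ^ 2 ≤ (N : ℝ) * (16 / τ ^ 2) := by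
    calc ∑ i ∈ Finset.range N, ((1 + t) * E i) ^ 2
        ≤ ∑ _i ∈ Finset.range N, (16 / τ ^ 2) := by
          apply Finset.sum_le_sum
          intro i _
          have h := (hkey i).trans (min_le_left _ _)
          have h2 : |(1 + t) * E i| ^ 2 ≤ (4 / τ) ^ 2 := pow_le_pow_left₀ (abs_nonneg _) h 2
          calc ((1 + t) * E i) ^ 2 = |(1 + t) * E i| ^ 2 := (sq_abs _).symm
            _ ≤ (4 / τ) ^ 2 := h2
            _ = 16 / τ ^ 2 := by rw [div_pow]; norm_num
      _ = (N : ℝ) * (16 / τ ^ 2) := by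
          rw [Finset.sum_const, Finset.card_range, nsmul_eq_mul]
  have htail_le : (∑' i, ((1 + t) * E (i + N)) ^ 2)
      ≤ 18 * (∑' k, (1 / lamτ τ k - 1 / lam k) ^ 2) + 18 * (∑' k, (1 / lam (k + N)) ^ 2) := by
    have hb : ∀ i, ((1 + t) * E (i + N)) ^ 2
        ≤ 18 * (1 / lamτ τ (i + N) - 1 / lam (i + N)) ^ 2 + 18 * (1 / lam (i + N)) ^ 2 := by
      intro i
      have h9 := hsq9 (i + N)
      nlinarith [sq_nonneg (1 / lamτ τ (i + N) - 2 * (1 / lam (i + N)))]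
    have hsum1 : Summable fun i => (1 / lamτ τ (i + N) - 1 / lam (i + N)) ^ 2 :=
      (summable_nat_add_iff N).mpr hdsum
    have hsum2 : Summable fun i => (1 / lam (i + N)) ^ 2 :=
      (summable_nat_add_iff N).mpr hHS
    calc (∑' i, ((1 + t) * E (i + N)) ^ 2)
        ≤ ∑' i, (18 * (1 / lamτ τ (i + N) - 1 / lam (i + N)) ^ 2
            + 18 * (1 / lam (i + N)) ^ 2) :=
          Summable.tsum_le_tsum hb ((summable_nat_add_iff N).mpr hsumE)
            ((hsum1.mul_left 18).add (hsum2.mul_left 18))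
      _ = 18 * (∑' i, (1 / lamτ τ (i + N) - 1 / lam (i + N)) ^ 2)
            + 18 * (∑' i, (1 / lam (i + N)) ^ 2) := by
          rw [Summable.tsum_add (hsum1.mul_left 18) (hsum2.mul_left 18), tsum_mul_left, tsum_mul_left]
      _ ≤ 18 * (∑' k, (1 / lamτ τ k - 1 / lam k) ^ 2) + 18 * (∑' k, (1 / lam (k + N)) ^ 2) := by
          have hts := Summable.sum_add_tsum_nat_add N hdsum
          have hnn : 0 ≤ ∑ i ∈ Finset.range N, (1 / lamτ τ i - 1 / lam i) ^ 2 :=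
            Finset.sum_nonneg fun i _ => sq_nonneg _
          have hmono : (∑' i, (1 / lamτ τ (i + N) - 1 / lam (i + N)) ^ 2)
              ≤ ∑' k, (1 / lamτ τ k - 1 / lam k) ^ 2 := by linarith
          linarith
  have hS : (∑' k, ((1 + t) * E k) ^ 2) < ε ^ 2 := by
    have := hsplit
    nlinarith [hhead, htail_le, hδ, hNτ, hN]
  -- relate to the goal
  have hgoal_eq : (1 + t) * Real.sqrt (∑' k, E k ^ 2)
      = Real.sqrt (∑' k, ((1 + t) * E k) ^ 2) := by
    have : (fun k => ((1 + t) * E k) ^ 2) = fun k => (1 + t) ^ 2 * E k ^ 2 := by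
      funext k; ring
    rw [this, tsum_mul_left, Real.sqrt_mul (sq_nonneg _), Real.sqrt_sq ht0]
  have hfinal : (1 + t) * Real.sqrt (∑' k, E k ^ 2) < ε := by
    rw [hgoal_eq, Real.sqrt_lt' hε]
    exact hS
  have hnn : 0 ≤ (1 + t) * Real.sqrt (∑' k, E k ^ 2) :=
    mul_nonneg ht0 (Real.sqrt_nonneg _)
  have hd : dist (0:ℝ) ((1 + t) * Real.sqrt (∑' k, E k ^ 2)) < ε := by
    rw [Real.dist_eq, abs_sub_comm, sub_zero, abs_of_nonneg hnn]
    exact hfinal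
  exact hd
end

section
/- (Stability of Borel summation) Let R ≥ 1, σ ≥ 1, ν > 0. Suppose A and A_τ (τ > 0) are analytic on C_R = {z : Re z^{-1} > R^{-1}} with asymptotic expansions A(z) = ∑_{m<M} a_m z^m + R_M(z) and A_τ(z) = ∑_{m<M} a_{τ,m} z^m + R_{τ,M}(z), where |a_m|, |a_{τ,m}| ≤ ν σ^m m! and |R_M(z)|, |R_{τ,M}(z)| ≤ ν σ^M M! |z|^M on C_R, all uniformly in τ. If a_{τ,m} → a_m as τ → ∞ for every m, then A_τ(z) → A(z) for every z ∈ C_R. -/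
open Filter

namespace Stmt12Aux

open Set Metric Complex Real

lemma U_eq_ball {R : ℝ} (hR : 0 < R) :
    {z : ℂ | 1 / R < (1 / z).re} = Metric.ball (((R / 2 : ℝ)) : ℂ) (R / 2) := by
  ext z
  simp only [Set.mem_setOf_eq, Metric.mem_ball, Complex.dist_eq, one_div, Complex.inv_re]
  have habs : ‖z - ((R / 2 : ℝ) : ℂ)‖ < R / 2 ↔
      Complex.normSq (z - ((R / 2 : ℝ) : ℂ)) < (R / 2) ^ 2 := by
    rw [Complex.norm_def, Real.sqrt_lt' (by positivity)]
  rw [habs]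
  have hnsq : Complex.normSq (z - ((R / 2 : ℝ) : ℂ)) =
      (z.re - R / 2) ^ 2 + z.im ^ 2 := by
    simp only [Complex.normSq_apply, Complex.sub_re, Complex.sub_im, Complex.ofReal_re,
      Complex.ofReal_im]
    ring
  have hq : Complex.normSq z = z.re ^ 2 + z.im ^ 2 := by
    simp only [Complex.normSq_apply]; ring
  rw [hnsq]
  constructor
  · intro h
    have hz : z ≠ 0 := by
      rintro rfl
      simp only [Complex.zero_re, Complex.normSq_zero, zero_div] at h
      have : (0:ℝ) < R⁻¹ := by positivity
      linarith
    have hpos : 0 < Complex.normSq z := Complex.normSq_pos.2 hz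
    rw [lt_div_iff₀ hpos] at h
    have h' : Complex.normSq z < R * z.re := by
      calc Complex.normSq z = R * (R⁻¹ * Complex.normSq z) := by field_simp
      _ < R * z.re := mul_lt_mul_of_pos_left h hR
    nlinarith [hq ▸ h']
  · intro h
    have hx : Complex.normSq z < R * z.re := by nlinarith
    have hzre : 0 < z.re := by nlinarith [Complex.normSq_nonneg z]
    have hz : z ≠ 0 := fun h0 => by simp [h0] at hzre
    have hpos : 0 < Complex.normSq z := Complex.normSq_pos.2 hz
    rw [lt_div_iff₀ hpos]
    have := mul_lt_mul_of_pos_left hx (inv_pos.2 hR)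
    calc R⁻¹ * Complex.normSq z < R⁻¹ * (R * z.re) := this
    _ = z.re := by field_simp

lemma ne_zero_of_mem {R : ℝ} (hR : 0 < R) {z : ℂ} (hz : 1 / R < (1 / z).re) : z ≠ 0 := by
  rintro rfl
  rw [div_zero] at hz
  simp only [Complex.zero_re] at hz
  have : (0:ℝ) < 1 / R := by positivity
  linarith

lemma norm_lt_of_mem {R : ℝ} (hR : 0 < R) {z : ℂ} (hz : 1 / R < (1 / z).re) : ‖z‖ < R := by
  have h := U_eq_ball hR ▸ (Set.mem_setOf_eq ▸ hz :
      z ∈ {z : ℂ | 1 / R < (1 / z).re})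
  rw [Metric.mem_ball, Complex.dist_eq] at h
  calc ‖z‖ = ‖(z - ((R/2:ℝ):ℂ)) + ((R/2:ℝ):ℂ)‖ := by
        rw [sub_add_cancel]
  _ ≤ ‖z - ((R/2:ℝ):ℂ)‖ + ‖((R/2:ℝ):ℂ)‖ := norm_add_le _ _
  _ < R / 2 + R / 2 := by
      refine add_lt_add_of_lt_of_le h ?_
      rw [Complex.norm_real, Real.norm_eq_abs]
      rw [abs_of_pos (by positivity)]
  _ = R := by ring

lemma inv_mem {R : ℝ} (hR : 0 < R) {w : ℂ} (hw : 1 / R < w.re) :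
    w⁻¹ ∈ {z : ℂ | 1 / R < (1 / z).re} := by
  have hw0 : w ≠ 0 := by
    intro h; rw [h] at hw; simp only [Complex.zero_re] at hw
    have : (0:ℝ) < 1 / R := by positivity
    linarith
  simp only [Set.mem_setOf_eq, one_div, inv_inv]
  rwa [one_div] at hw


lemma cpow_re_formula {t : ℝ} {ζ : ℂ} (hζ : ζ ≠ 0) :
    (ζ ^ (t : ℂ)).re = ‖ζ‖ ^ t * Real.cos (t * Complex.arg ζ) := by
  rw [Complex.cpow_def_of_ne_zero hζ, Complex.exp_re]
  have h1 : (Complex.log ζ * (t : ℂ)).re = Real.log (‖ζ‖) * t := by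
    simp [Complex.mul_re, Complex.log_re]
  have h2 : (Complex.log ζ * (t : ℂ)).im = Complex.arg ζ * t := by
    simp [Complex.mul_im, Complex.log_im]
  rw [h1, h2, mul_comm (Complex.arg ζ) t]
  congr 1
  rw [Real.rpow_def_of_pos (norm_pos_iff.mpr hζ)]

lemma cpow_re_nonneg {t : ℝ} (ht0 : 0 < t) (ht1 : t ≤ 1) {ζ : ℂ} (hζ : 0 ≤ ζ.re) :
    0 ≤ (ζ ^ (t : ℂ)).re := by
  rcases eq_or_ne ζ 0 with rfl | hne
  · rw [Complex.zero_cpow (by exact_mod_cast ht0.ne' : (t : ℂ) ≠ 0)]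
    simp
  rw [cpow_re_formula hne]
  refine mul_nonneg (Real.rpow_nonneg (norm_nonneg _) _) ?_
  have harg : |Complex.arg ζ| ≤ π / 2 := Complex.abs_arg_le_pi_div_two_iff.2 hζ
  have habs : |t * Complex.arg ζ| ≤ π / 2 := by
    rw [abs_mul, abs_of_pos ht0]
    calc t * |Complex.arg ζ| ≤ 1 * (π / 2) :=
      mul_le_mul ht1 harg (abs_nonneg _) zero_le_one
    _ = π / 2 := one_mul _
  exact Real.cos_nonneg_of_mem_Icc (abs_le.1 habs |> fun h => ⟨h.1, h.2⟩)

lemma cpow_re_axis {t : ℝ} (ht0 : 0 < t) (ht1 : t ≤ 1) (y : ℝ) :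
    (((y : ℂ) * Complex.I) ^ (t : ℂ)).re ≤ |y| ^ t * Real.cos (t * (π / 2)) := by
  rcases eq_or_ne y 0 with rfl | hy
  · rw [Complex.ofReal_zero, zero_mul,
      Complex.zero_cpow (by exact_mod_cast ht0.ne' : (t : ℂ) ≠ 0)]
    simp [Real.zero_rpow ht0.ne']
  · have hζ : (y : ℂ) * Complex.I ≠ 0 :=
      mul_ne_zero (Complex.ofReal_ne_zero.2 hy) Complex.I_ne_zero
    rw [cpow_re_formula hζ]
    have habs : ‖(y : ℂ) * Complex.I‖ = |y| := by
      rw [norm_mul, Complex.norm_I, Complex.norm_real, Real.norm_eq_abs, mul_one]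
    rw [habs]
    have hre : ((y : ℂ) * Complex.I).re = 0 := by simp
    have him : ((y : ℂ) * Complex.I).im = y := by simp
    rcases lt_or_gt_of_ne hy with hneg | hpos
    · have harg : Complex.arg ((y : ℂ) * Complex.I) = -(π / 2) :=
        Complex.arg_eq_neg_pi_div_two_iff.2 ⟨hre, by rw [him]; exact hneg⟩
      rw [harg, mul_neg, Real.cos_neg]
    · have harg : Complex.arg ((y : ℂ) * Complex.I) = π / 2 :=
        Complex.arg_eq_pi_div_two_iff.2 ⟨hre, by rw [him]; exact hpos⟩
      rw [harg]

lemma cpow_continuousAt {t : ℝ} (ht0 : 0 < t) {ζ : ℂ} (hζ : 0 ≤ ζ.re) :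
    ContinuousAt (fun w : ℂ => w ^ (t : ℂ)) ζ :=
  Complex.continuousAt_cpow_const_of_re_pos (Or.inl hζ) (by simpa using ht0)

lemma cpow_differentiableAt {t : ℝ} {ζ : ℂ} (hζ : 0 < ζ.re) :
    DifferentiableAt ℂ (fun w : ℂ => w ^ (t : ℂ)) ζ :=
  DifferentiableAt.cpow differentiableAt_id (differentiableAt_const _)
    (Complex.mem_slitPlane_iff.2 (Or.inl hζ))

lemma rpow_le_one_add {t u : ℝ} (ht0 : 0 ≤ t) (ht1 : t ≤ 1) (hu : 0 ≤ u) :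
    u ^ t ≤ 1 + u := by
  rcases le_total u 1 with h | h
  · calc u ^ t ≤ 1 := Real.rpow_le_one hu h ht0
    _ ≤ 1 + u := by linarith
  · calc u ^ t ≤ u ^ (1:ℝ) := Real.rpow_le_rpow_of_exponent_le h ht1
    _ = u := Real.rpow_one u
    _ ≤ 1 + u := by linarith


lemma exp_half_le_two : Real.exp (1/2 : ℝ) ≤ 2 := by
  have hm : Real.exp (1/2 : ℝ) * Real.exp (1/2 : ℝ) = Real.exp 1 := by
    rw [← Real.exp_add]; norm_num
  nlinarith [Real.exp_one_lt_d9, Real.exp_pos (1/2 : ℝ)]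

lemma decay {R σ K : ℝ} (hR : 1 ≤ R) (hσ : 1 ≤ σ) (hK : 0 < K) {D : ℂ → ℂ}
    (hbd : ∀ M : ℕ, ∀ z ∈ {z : ℂ | 1 / R < (1 / z).re},
      ‖D z‖ ≤ K * σ ^ M * M.factorial * ‖z‖ ^ M)
    {z : ℂ} (hz : z ∈ {z : ℂ | 1 / R < (1 / z).re}) :
    ‖D z‖ ≤ 2 * K * Real.exp (-(1 / (4 * σ)) / ‖z‖) := by
  have hR0 : 0 < R := lt_of_lt_of_le one_pos hR
  have hσ0 : 0 < σ := lt_of_lt_of_le one_pos hσ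
  have hz0 : z ≠ 0 := ne_zero_of_mem hR0 hz
  have hn : 0 < ‖z‖ := norm_pos_iff.2 hz0
  set n : ℝ := ‖z‖ with hn_def
  set s : ℝ := n⁻¹ with hs_def
  have hs : 0 < s := inv_pos.2 hn
  set δ : ℝ := 1 / (4 * σ) with hδ_def
  have hδ : 0 < δ := by positivity
  have hexp_eq : -(1 / (4 * σ)) / ‖z‖ = -(δ * s) := by
    rw [div_eq_mul_inv, neg_mul, ← hn_def, ← hs_def, ← hδ_def]
  rw [hexp_eq]
  have hδs : δ * s = s / (2 * σ) / 2 := by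
    have h4 : (4:ℝ) * σ = (2 * σ) * 2 := by ring
    rw [hδ_def, h4, div_div, one_div_mul_eq_div]
  set M : ℕ := ⌊s / (2 * σ)⌋₊ with hM_def
  rcases Nat.eq_zero_or_pos M with hM0 | hMpos
  · -- small s case
    have hlt : s / (2 * σ) < 1 := by
      have := Nat.floor_eq_zero.1 hM0
      exact this
    have hδs2 : δ * s < 1 / 2 := by rw [hδs]; linarith
    have hD : ‖D z‖ ≤ K := by
      have h0 := hbd 0 z hz
      simp only [pow_zero, Nat.factorial_zero, Nat.cast_one, mul_one] at h0
      exact h0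
    have hexp_ge : (1:ℝ) / 2 ≤ Real.exp (-(δ * s)) := by
      have h1 := Real.add_one_le_exp (-(δ * s))
      linarith
    calc ‖D z‖ ≤ K := hD
    _ = 2 * K * (1/2) := by ring
    _ ≤ 2 * K * Real.exp (-(δ * s)) := by
        have h2K : (0:ℝ) ≤ 2 * K := by positivity
        exact mul_le_mul_of_nonneg_left hexp_ge h2K
  · have h1 : (M : ℝ) ≤ s / (2 * σ) := Nat.floor_le (by positivity)
    have h2 : s / (2 * σ) < M + 1 := Nat.lt_floor_add_one _
    have hfact : (M.factorial : ℝ) ≤ (M : ℝ) ^ M := by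
      exact_mod_cast Nat.factorial_le_pow M
    have hns : n = s⁻¹ := by rw [hs_def, inv_inv]
    have hσMn : σ * M * n ≤ 1 / 2 := by
      have hh : (M : ℝ) * (2 * σ) ≤ s :=
        (le_div_iff₀ (by positivity : (0:ℝ) < 2 * σ)).1 h1
      have hh2 : (M : ℝ) * (2 * σ) * n ≤ s * n := by
        exact mul_le_mul_of_nonneg_right hh hn.le
      have hsn : s * n = 1 := by rw [hs_def]; field_simp
      rw [hsn] at hh2
      nlinarith
    have hstep : ‖D z‖ ≤ K * (1/2 : ℝ) ^ M := by
      calc ‖D z‖ ≤ K * σ ^ M * M.factorial * ‖z‖ ^ M := hbd M z hz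
      _ ≤ K * σ ^ M * (M:ℝ)^M * n ^ M := by
          rw [← hn_def]
          have : K * σ ^ M > 0 := by positivity
          exact mul_le_mul_of_nonneg_right
            (mul_le_mul_of_nonneg_left hfact (by positivity)) (by positivity)
      _ = K * (σ * M * n) ^ M := by rw [mul_pow, mul_pow]; ring
      _ ≤ K * (1/2 : ℝ) ^ M := by
          refine mul_le_mul_of_nonneg_left ?_ hK.le
          exact pow_le_pow_left₀ (by positivity) hσMn M
    have hδsM : δ * s < ((M:ℝ) + 1) / 2 := by rw [hδs]; linarith
    have hkey : ((1:ℝ)/2) ^ M * Real.exp (δ * s) ≤ 2 := by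
      have hexp1 : Real.exp (δ * s) ≤ (2:ℝ) ^ (M + 1) := by
        calc Real.exp (δ * s) ≤ Real.exp (((M:ℝ) + 1) / 2) := Real.exp_le_exp.2 hδsM.le
        _ = Real.exp (1/2 : ℝ) ^ (M + 1) := by
            rw [← Real.exp_nat_mul]
            congr 1
            push_cast
            ring
        _ ≤ (2:ℝ) ^ (M + 1) := pow_le_pow_left₀ (Real.exp_pos _).le exp_half_le_two _
      calc ((1:ℝ)/2) ^ M * Real.exp (δ * s) ≤ ((1:ℝ)/2) ^ M * (2:ℝ) ^ (M+1) :=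
          mul_le_mul_of_nonneg_left hexp1 (by positivity : (0:ℝ) ≤ ((1:ℝ)/2) ^ M)
      _ = 2 := by
          rw [one_div, inv_pow, pow_succ]
          have h2M : ((2:ℝ) ^ M) ≠ 0 := by positivity
          field_simp
    have hhalf : ((1:ℝ)/2) ^ M ≤ 2 * Real.exp (-(δ * s)) := by
      rw [Real.exp_neg]
      rw [← le_div_iff₀ (Real.exp_pos _)] at hkey
      calc ((1:ℝ)/2) ^ M ≤ 2 / Real.exp (δ * s) := hkey
      _ = 2 * (Real.exp (δ * s))⁻¹ := div_eq_mul_inv _ _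
    calc ‖D z‖ ≤ K * (1/2 : ℝ) ^ M := hstep
    _ ≤ K * (2 * Real.exp (-(δ * s))) := mul_le_mul_of_nonneg_left hhalf hK.le
    _ = 2 * K * Real.exp (-(δ * s)) := by ring


lemma bound_zero {R σ K : ℝ} (hK : 0 < K) {D : ℂ → ℂ}
    (hbd : ∀ M : ℕ, ∀ z ∈ {z : ℂ | 1 / R < (1 / z).re},
      ‖D z‖ ≤ K * σ ^ M * M.factorial * ‖z‖ ^ M)
    {z : ℂ} (hz : z ∈ {z : ℂ | 1 / R < (1 / z).re}) : ‖D z‖ ≤ K := by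
  have h0 := hbd 0 z hz
  simp only [pow_zero, Nat.factorial_zero, Nat.cast_one, mul_one] at h0
  exact h0

lemma keybound {R σ K : ℝ} (hR : 1 ≤ R) (hσ : 1 ≤ σ) (hK : 0 < K) {D : ℂ → ℂ}
    (hD : DifferentiableOn ℂ D {z : ℂ | 1 / R < (1 / z).re})
    (hbd : ∀ M : ℕ, ∀ z ∈ {z : ℂ | 1 / R < (1 / z).re},
      ‖D z‖ ≤ K * σ ^ M * M.factorial * ‖z‖ ^ M)
    {b : ℝ} (hb : 1 / R < b) {c : ℝ} (hc : 1 / (4 * σ) ≤ c) {s : ℝ} (hs : 0 ≤ s) :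
    ‖D (((b + s : ℝ) : ℂ)⁻¹)‖ ≤
      2 * K * Real.exp (1 / (4 * σ) * b) * Real.exp (-c * s) := by
  have hR0 : 0 < R := lt_of_lt_of_le one_pos hR
  have hσ0 : 0 < σ := lt_of_lt_of_le one_pos hσ
  have hb0 : 0 < b := lt_trans (by positivity) hb
  obtain ⟨δ, hδ_def⟩ : ∃ δ : ℝ, δ = 1 / (4 * σ) := ⟨_, rfl⟩
  rw [← hδ_def] at hc ⊢
  have hδ : 0 < δ := by rw [hδ_def]; positivity
  have hc0 : 0 < c := lt_of_lt_of_le hδ hc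
  have hπ : (3:ℝ) < π := Real.pi_gt_three
  obtain ⟨a, ha_def⟩ : ∃ a : ℝ, a = 1 - 2 * δ / (π * c) := ⟨_, rfl⟩
  have hfrac_pos : 0 < 2 * δ / (π * c) := by positivity
  have hfrac_lt : 2 * δ / (π * c) < 1 := by
    rw [div_lt_one (by positivity)]
    nlinarith
  have ha0 : 0 < a := by rw [ha_def]; linarith
  have ha1 : a < 1 := by rw [ha_def]; linarith
  obtain ⟨a', ha'_def⟩ : ∃ a' : ℝ, a' = (1 + a) / 2 := ⟨_, rfl⟩
  have ha'0 : 0 < a' := by rw [ha'_def]; linarith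
  have haa' : a < a' := by rw [ha'_def]; linarith
  have ha'1 : a' < 1 := by rw [ha'_def]; linarith
  have hccos : c * Real.cos (a * (π / 2)) ≤ δ := by
    have hcos_eq : a * (π / 2) = π / 2 - δ / c := by
      rw [ha_def]; field_simp
    rw [hcos_eq, Real.cos_pi_div_two_sub]
    calc c * Real.sin (δ / c) ≤ c * (δ / c) :=
      mul_le_mul_of_nonneg_left (Real.sin_le (by positivity)) hc0.le
    _ = δ := by rw [mul_comm, div_mul_cancel₀ _ hc0.ne']
  have hUopen : IsOpen {z : ℂ | 1 / R < (1 / z).re} := by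
    rw [U_eq_ball hR0]; exact Metric.isOpen_ball
  obtain ⟨C, hC_def⟩ : ∃ C : ℝ, C = 2 * K * Real.exp (δ * b) := ⟨_, rfl⟩
  -- membership facts
  have hmem : ∀ ζ : ℂ, 0 ≤ ζ.re →
      b ≤ ((b : ℂ) + ζ ^ (a : ℂ)).re ∧ ((b : ℂ) + ζ ^ (a : ℂ)) ≠ 0 ∧
        ((b : ℂ) + ζ ^ (a : ℂ))⁻¹ ∈ {z : ℂ | 1 / R < (1 / z).re} := by
    intro ζ hζ
    have hre : b ≤ ((b : ℂ) + ζ ^ (a : ℂ)).re := by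
      rw [Complex.add_re, Complex.ofReal_re]
      have := cpow_re_nonneg ha0 ha1.le hζ
      linarith
    have hne : ((b : ℂ) + ζ ^ (a : ℂ)) ≠ 0 := by
      intro h0
      rw [h0] at hre
      simp only [Complex.zero_re] at hre
      linarith
    exact ⟨hre, hne, inv_mem hR0 (lt_of_lt_of_le hb hre)⟩
  -- the main claim for x ≥ 0
  have claim : ∀ x : ℝ, 0 ≤ x →
      ‖D (((b : ℂ) + (x : ℂ) ^ (a : ℂ))⁻¹)‖ ≤ C * Real.exp (-c * x ^ a) := by
    intro x hx
    have claim2 : ∀ ε : ℝ, 0 < ε →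
        ‖D (((b : ℂ) + (x : ℂ) ^ (a : ℂ))⁻¹)‖ *
          Real.exp (c * x ^ a - ε * x ^ a') ≤ C := by
      intro ε hε
      obtain ⟨F, hF_def⟩ : ∃ F : ℂ → ℂ, F = fun ζ => D (((b : ℂ) + ζ ^ (a : ℂ))⁻¹) *
        Complex.exp ((c : ℂ) * ζ ^ (a : ℂ) - (ε : ℂ) * ζ ^ (a' : ℂ)) := ⟨_, rfl⟩
      -- differentiability
      have hFd : DiffContOnCl ℂ F {z : ℂ | 0 < z.re} := by
        constructor
        · rw [hF_def]
          intro ζ hζ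
          have hζ' : (0:ℝ) < ζ.re := hζ
          obtain ⟨hre, hne, hmemU⟩ := hmem ζ hζ'.le
          have h1 : DifferentiableAt ℂ (fun w : ℂ => w ^ (a : ℂ)) ζ :=
            cpow_differentiableAt hζ'
          have h1' : DifferentiableAt ℂ (fun w : ℂ => w ^ (a' : ℂ)) ζ :=
            cpow_differentiableAt hζ'
          have h2 : DifferentiableAt ℂ (fun w : ℂ => ((b : ℂ) + w ^ (a : ℂ))⁻¹) ζ :=
            (((differentiableAt_const _).add h1).inv hne)
          have h3 : DifferentiableAt ℂ D (((b : ℂ) + ζ ^ (a : ℂ))⁻¹) :=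
            (hD _ hmemU).differentiableAt (hUopen.mem_nhds hmemU)
          have h4 : DifferentiableAt ℂ (fun w : ℂ => D (((b : ℂ) + w ^ (a : ℂ))⁻¹)) ζ :=
            h3.comp ζ h2
          have h5 : DifferentiableAt ℂ (fun w : ℂ =>
              Complex.exp ((c : ℂ) * w ^ (a : ℂ) - (ε : ℂ) * w ^ (a' : ℂ))) ζ :=
            (Complex.differentiable_exp _).comp ζ
              (((differentiableAt_const _).mul h1).sub ((differentiableAt_const _).mul h1'))
          exact (h4.mul h5).differentiableWithinAt
        · refine ContinuousOn.mono ?_ (by rw [closure_setOf_lt_re])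
          rw [hF_def]
          intro ζ hζ
          have hζ' : (0:ℝ) ≤ ζ.re := hζ
          obtain ⟨hre, hne, hmemU⟩ := hmem ζ hζ'
          have h1 : ContinuousAt (fun w : ℂ => w ^ (a : ℂ)) ζ := cpow_continuousAt ha0 hζ'
          have h1' : ContinuousAt (fun w : ℂ => w ^ (a' : ℂ)) ζ := cpow_continuousAt ha'0 hζ'
          have h2 : ContinuousAt (fun w : ℂ => ((b : ℂ) + w ^ (a : ℂ))⁻¹) ζ :=
            ((continuousAt_const.add h1).inv₀ hne)
          have h3 : ContinuousAt D (((b : ℂ) + ζ ^ (a : ℂ))⁻¹) :=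
            ((hD _ hmemU).differentiableAt (hUopen.mem_nhds hmemU)).continuousAt
          have h4 : ContinuousAt (fun w : ℂ => D (((b : ℂ) + w ^ (a : ℂ))⁻¹)) ζ :=
            ContinuousAt.comp (x := ζ) (g := D)
              (f := fun w : ℂ => ((b : ℂ) + w ^ (a : ℂ))⁻¹) h3 h2
          have h5 : ContinuousAt (fun w : ℂ =>
              Complex.exp ((c : ℂ) * w ^ (a : ℂ) - (ε : ℂ) * w ^ (a' : ℂ))) ζ :=
            Complex.continuous_exp.continuousAt.comp
              ((continuousAt_const.mul h1).sub (continuousAt_const.mul h1'))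
          exact (h4.mul h5).continuousWithinAt
      -- norm formula
      have hFnorm : ∀ ζ : ℂ, ‖F ζ‖ = ‖D (((b : ℂ) + ζ ^ (a : ℂ))⁻¹)‖ *
          Real.exp (c * (ζ ^ (a : ℂ)).re - ε * (ζ ^ (a' : ℂ)).re) := by
        intro ζ
        rw [hF_def]
        simp only [norm_mul, Complex.norm_exp]
        congr 2
        simp [Complex.sub_re, Complex.re_ofReal_mul]
      -- bound on the imaginary axis
      have him : ∀ y : ℝ, ‖F ((y : ℂ) * Complex.I)‖ ≤ C := by
        intro y
        obtain ⟨ζ, hζ_def⟩ : ∃ ζ : ℂ, ζ = (y : ℂ) * Complex.I := ⟨_, rfl⟩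
        rw [← hζ_def]
        have hζre : ζ.re = 0 := by rw [hζ_def]; simp
        obtain ⟨hre, hne, hmemU⟩ := hmem ζ (le_of_eq hζre.symm)
        obtain ⟨w, hw_def⟩ : ∃ w : ℂ, w = (b : ℂ) + ζ ^ (a : ℂ) := ⟨_, rfl⟩
        rw [← hw_def] at hre hne hmemU
        have hDdecay : ‖D w⁻¹‖ ≤ 2 * K * Real.exp (-(δ * ‖w‖)) := by
          have h := decay hR hσ hK hbd hmemU
          rwa [norm_inv, div_inv_eq_mul, ← hδ_def, neg_mul] at h
        have habs_ζa : ‖ζ ^ (a : ℂ)‖ = |y| ^ a := by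
          rw [Complex.norm_cpow_real, hζ_def, norm_mul,
            Complex.norm_I, Complex.norm_real, Real.norm_eq_abs, mul_one]
        have hw_norm : |y| ^ a - b ≤ ‖w‖ := by
          have h2 : ‖ζ ^ (a : ℂ)‖ - ‖w‖ ≤ ‖ζ ^ (a : ℂ) - w‖ := norm_sub_norm_le _ _
          have h3 : ζ ^ (a : ℂ) - w = -(b : ℂ) := by rw [hw_def]; ring
          rw [h3, norm_neg] at h2
          have hbnorm : ‖(b : ℂ)‖ = b := by
            rw [Complex.norm_real, Real.norm_eq_abs, abs_of_pos hb0]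
          rw [hbnorm] at h2
          rw [← habs_ζa]
          linarith
        have hre_a : (ζ ^ (a : ℂ)).re ≤ |y| ^ a * Real.cos (a * (π / 2)) := by
          rw [hζ_def]
          exact cpow_re_axis ha0 ha1.le y
        have hre_a' : 0 ≤ (ζ ^ (a' : ℂ)).re :=
          cpow_re_nonneg ha'0 ha'1.le (le_of_eq hζre.symm)
        rw [hFnorm ζ, ← hw_def, hC_def]
        calc ‖D w⁻¹‖ * Real.exp (c * (ζ ^ (a:ℂ)).re - ε * (ζ ^ (a':ℂ)).re)
            ≤ (2 * K * Real.exp (-(δ * ‖w‖))) *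
              Real.exp (c * (ζ ^ (a:ℂ)).re - ε * (ζ ^ (a':ℂ)).re) :=
          mul_le_mul_of_nonneg_right hDdecay (Real.exp_pos _).le
        _ = 2 * K * Real.exp (-(δ * ‖w‖) + (c * (ζ ^ (a:ℂ)).re - ε * (ζ ^ (a':ℂ)).re)) := by
            rw [mul_assoc, ← Real.exp_add]
        _ ≤ 2 * K * Real.exp (δ * b) := by
            have f1 : c * (ζ ^ (a:ℂ)).re ≤ δ * |y| ^ a := by
              calc c * (ζ ^ (a:ℂ)).re ≤ c * (|y| ^ a * Real.cos (a * (π / 2))) :=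
                mul_le_mul_of_nonneg_left hre_a hc0.le
              _ = (c * Real.cos (a * (π / 2))) * |y| ^ a := by ring
              _ ≤ δ * |y| ^ a :=
                mul_le_mul_of_nonneg_right hccos (Real.rpow_nonneg (abs_nonneg _) _)
            have f2 : δ * (|y| ^ a - b) ≤ δ * ‖w‖ := mul_le_mul_of_nonneg_left hw_norm hδ.le
            have f3 : 0 ≤ ε * (ζ ^ (a':ℂ)).re := mul_nonneg hε.le hre_a'
            have hexple : -(δ * ‖w‖) + (c * (ζ ^ (a:ℂ)).re - ε * (ζ ^ (a':ℂ)).re) ≤ δ * b := by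
              nlinarith
            exact mul_le_mul_of_nonneg_left (Real.exp_le_exp.2 hexple) (by positivity)
      -- growth bound
      have hgrowth : ∃ cc < (2:ℝ), ∃ B,
          F =O[Bornology.cobounded ℂ ⊓ Filter.principal {z : ℂ | 0 < z.re}]
          fun ζ => Real.exp (B * ‖ζ‖ ^ cc) := by
        refine ⟨1, one_lt_two, c + ε, Asymptotics.IsBigO.of_bound (K * Real.exp (c + ε)) ?_⟩
        rw [Filter.eventually_inf_principal]
        refine Filter.Eventually.of_forall ?_
        intro ζ hζ
        have hζ' : (0:ℝ) < ζ.re := hζ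
        obtain ⟨hre, hne, hmemU⟩ := hmem ζ hζ'.le
        have hDb : ‖D (((b : ℂ) + ζ ^ (a : ℂ))⁻¹)‖ ≤ K := bound_zero hK hbd hmemU
        have habs1 : (ζ ^ (a:ℂ)).re ≤ 1 + ‖ζ‖ := by
          calc (ζ ^ (a:ℂ)).re ≤ ‖ζ ^ (a:ℂ)‖ := Complex.re_le_norm _
          _ = ‖ζ‖ ^ a := Complex.norm_cpow_real _ _
          _ ≤ 1 + ‖ζ‖ := rpow_le_one_add ha0.le ha1.le (norm_nonneg _)
        have habs2 : -(ζ ^ (a':ℂ)).re ≤ 1 + ‖ζ‖ := by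
          calc -(ζ ^ (a':ℂ)).re ≤ |(ζ ^ (a':ℂ)).re| := neg_le_abs _
          _ ≤ ‖ζ ^ (a':ℂ)‖ := Complex.abs_re_le_norm _
          _ = ‖ζ‖ ^ a' := Complex.norm_cpow_real _ _
          _ ≤ 1 + ‖ζ‖ := rpow_le_one_add ha'0.le ha'1.le (norm_nonneg _)
        rw [hFnorm ζ]
        have hexpbound : c * (ζ ^ (a:ℂ)).re - ε * (ζ ^ (a':ℂ)).re ≤
            (c + ε) * (1 + ‖ζ‖) := by
          have g1 : c * (ζ ^ (a:ℂ)).re ≤ c * (1 + ‖ζ‖) :=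
            mul_le_mul_of_nonneg_left habs1 hc0.le
          have g2 : -(ε * (ζ ^ (a':ℂ)).re) ≤ ε * (1 + ‖ζ‖) := by
            rw [neg_mul_eq_mul_neg]
            exact mul_le_mul_of_nonneg_left habs2 hε.le
          nlinarith
        calc ‖D (((b : ℂ) + ζ ^ (a : ℂ))⁻¹)‖ *
            Real.exp (c * (ζ ^ (a:ℂ)).re - ε * (ζ ^ (a':ℂ)).re)
            ≤ K * Real.exp ((c + ε) * (1 + ‖ζ‖)) :=
              mul_le_mul hDb (Real.exp_le_exp.2 hexpbound) (Real.exp_pos _).le hK.le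
        _ = K * Real.exp (c + ε) * Real.exp ((c + ε) * ‖ζ‖) := by
              rw [mul_add, mul_one, Real.exp_add, mul_assoc]
        _ = K * Real.exp (c + ε) * ‖Real.exp ((c + ε) * ‖ζ‖ ^ (1:ℝ))‖ := by
              rw [Real.rpow_one, Real.norm_eq_abs, Real.abs_exp]
      -- behaviour on the real axis
      have hFreal : ∀ u : ℝ, 0 ≤ u → ‖F (u : ℂ)‖ =
          ‖D (((b + u ^ a : ℝ) : ℂ)⁻¹)‖ * Real.exp (c * u ^ a - ε * u ^ a') := by
        intro u hu
        have e1 : (u : ℂ) ^ (a : ℂ) = ((u ^ a : ℝ) : ℂ) := (Complex.ofReal_cpow hu a).symm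
        have e2 : (u : ℂ) ^ (a' : ℂ) = ((u ^ a' : ℝ) : ℂ) := (Complex.ofReal_cpow hu a').symm
        have e3 : ((b : ℂ) + ((u ^ a : ℝ) : ℂ)) = ((b + u ^ a : ℝ) : ℂ) := by
          push_cast; ring
        rw [hFnorm (u : ℂ), e1, e2, e3, Complex.ofReal_re, Complex.ofReal_re]
      have hbound : ∀ᶠ u : ℝ in Filter.atTop,
          ‖F (u : ℂ)‖ ≤ K * Real.exp (c * u ^ a - ε * u ^ a') := by
        filter_upwards [Filter.eventually_ge_atTop (0:ℝ)] with u hu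
        rw [hFreal u hu]
        refine mul_le_mul_of_nonneg_right ?_ (Real.exp_pos _).le
        have hmemu : (((b + u ^ a : ℝ) : ℂ))⁻¹ ∈ {z : ℂ | 1 / R < (1 / z).re} := by
          apply inv_mem hR0
          rw [Complex.ofReal_re]
          have : 0 ≤ u ^ a := Real.rpow_nonneg hu a
          linarith
        exact bound_zero hK hbd hmemu
      have hexp_bot : Filter.Tendsto (fun u : ℝ => c * u ^ a - ε * u ^ a')
          Filter.atTop Filter.atBot := by
        have heq : ∀ᶠ u : ℝ in Filter.atTop, c * u ^ a - ε * u ^ a' =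
            -(u ^ a * (ε * u ^ (a' - a) - c)) := by
          filter_upwards [Filter.eventually_gt_atTop (0:ℝ)] with u hu
          have hh : u ^ a * u ^ (a' - a) = u ^ a' := by
            rw [← Real.rpow_add hu]; ring_nf
          rw [← hh]; ring
        have hmul : Filter.Tendsto (fun u : ℝ => u ^ a * (ε * u ^ (a' - a) - c))
            Filter.atTop Filter.atTop := by
          apply Filter.Tendsto.atTop_mul_atTop₀ (tendsto_rpow_atTop ha0)
          apply Filter.tendsto_atTop_add_const_right
          exact (tendsto_rpow_atTop (by linarith)).const_mul_atTop hε
        rw [Filter.tendsto_congr' heq]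
        exact tendsto_neg_atTop_atBot.comp hmul
      have hgz : Filter.Tendsto (fun u : ℝ => K * Real.exp (c * u ^ a - ε * u ^ a'))
          Filter.atTop (nhds 0) := by
        have h0 := (Real.tendsto_exp_atBot.comp hexp_bot).const_mul K
        rw [mul_zero] at h0
        exact h0
      have hre_tendsto : Filter.Tendsto (fun u : ℝ => F (u : ℂ)) Filter.atTop (nhds 0) :=
        squeeze_zero_norm' hbound hgz
      -- apply Phragmen-Lindelof
      have hPL := PhragmenLindelof.right_half_plane_of_tendsto_zero_on_real
        hFd hgrowth hre_tendsto him (z := (x : ℂ)) (by rw [Complex.ofReal_re]; exact hx)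
      rw [hFreal x hx] at hPL
      have e1 : (x : ℂ) ^ (a : ℂ) = ((x ^ a : ℝ) : ℂ) := (Complex.ofReal_cpow hx a).symm
      rw [e1]
      have e3 : ((b : ℂ) + ((x ^ a : ℝ) : ℂ)) = ((b + x ^ a : ℝ) : ℂ) := by push_cast; ring
      rw [e3]
      exact hPL
    -- let ε → 0
    have h_eps : ∀ ε : ℝ, 0 < ε → ‖D (((b : ℂ) + (x : ℂ) ^ (a : ℂ))⁻¹)‖ ≤
        C * Real.exp (ε * x ^ a') * Real.exp (-c * x ^ a) := by
      intro ε hε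
      have h := claim2 ε hε
      have h2 := mul_le_mul_of_nonneg_right h
        (Real.exp_pos (-(c * x ^ a - ε * x ^ a'))).le
      rw [mul_assoc, ← Real.exp_add, add_neg_cancel, Real.exp_zero, mul_one] at h2
      calc ‖D (((b : ℂ) + (x : ℂ) ^ (a : ℂ))⁻¹)‖
          ≤ C * Real.exp (-(c * x ^ a - ε * x ^ a')) := h2
      _ = C * Real.exp (ε * x ^ a') * Real.exp (-c * x ^ a) := by
          rw [mul_assoc, ← Real.exp_add]
          congr 2
          ring
    have hlim : Filter.Tendsto (fun ε : ℝ => C * Real.exp (ε * x ^ a') *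
        Real.exp (-c * x ^ a)) (nhdsWithin 0 (Set.Ioi 0))
        (nhds (C * Real.exp (0 * x ^ a') * Real.exp (-c * x ^ a))) := by
      apply Filter.Tendsto.mono_left ?_ nhdsWithin_le_nhds
      exact Continuous.tendsto ((continuous_const.mul
        (Real.continuous_exp.comp (continuous_id.mul continuous_const))).mul
        continuous_const) 0
    rw [zero_mul, Real.exp_zero, mul_one] at hlim
    exact ge_of_tendsto hlim (eventually_nhdsWithin_of_forall fun ε hε => h_eps ε hε)
  -- substitute x := s ^ (a⁻¹)
  obtain ⟨x, hx_def⟩ : ∃ x : ℝ, x = s ^ a⁻¹ := ⟨_, rfl⟩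
  have hx0 : 0 ≤ x := by rw [hx_def]; exact Real.rpow_nonneg hs _
  have hxa : x ^ a = s := by rw [hx_def]; exact Real.rpow_inv_rpow hs ha0.ne'
  have h := claim x hx0
  rw [hxa] at h
  have e1 : (x : ℂ) ^ (a : ℂ) = ((x ^ a : ℝ) : ℂ) := (Complex.ofReal_cpow hx0 a).symm
  rw [e1, hxa] at h
  have e3 : ((b : ℂ) + ((s : ℝ) : ℂ)) = ((b + s : ℝ) : ℂ) := by push_cast; ring
  rw [e3] at h
  rw [hC_def] at h
  exact h


lemma watson {R σ K : ℝ} (hR : 1 ≤ R) (hσ : 1 ≤ σ) (hK : 0 < K) {D : ℂ → ℂ}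
    (hD : DifferentiableOn ℂ D {z : ℂ | 1 / R < (1 / z).re})
    (hbd : ∀ M : ℕ, ∀ z ∈ {z : ℂ | 1 / R < (1 / z).re},
      ‖D z‖ ≤ K * σ ^ M * M.factorial * ‖z‖ ^ M) :
    ∀ z ∈ {z : ℂ | 1 / R < (1 / z).re}, D z = 0 := by
  intro z hz
  have hR0 : 0 < R := lt_of_lt_of_le one_pos hR
  have hσ0 : 0 < σ := lt_of_lt_of_le one_pos hσ
  have hz0 : z ≠ 0 := ne_zero_of_mem hR0 hz
  have hzre : 1 / R < (1 / z).re := hz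
  have hUopen : IsOpen {z : ℂ | 1 / R < (1 / z).re} := by
    rw [U_eq_ball hR0]; exact Metric.isOpen_ball
  obtain ⟨b, hb_def⟩ : ∃ b : ℝ, b = (1 / R + (1 / z).re) / 2 := ⟨_, rfl⟩
  have hb1 : 1 / R < b := by rw [hb_def]; linarith
  have hb2 : b < (1 / z).re := by rw [hb_def]; linarith
  have hb0 : 0 < b := lt_trans (by positivity) hb1
  obtain ⟨δ, hδ_def⟩ : ∃ δ : ℝ, δ = 1 / (4 * σ) := ⟨_, rfl⟩
  have hδ : 0 < δ := by rw [hδ_def]; positivity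
  obtain ⟨G, hG_def⟩ : ∃ G : ℂ → ℂ, G = fun ζ : ℂ => D (((b : ℂ) + ζ)⁻¹) := ⟨_, rfl⟩
  have hmem : ∀ ζ : ℂ, 0 ≤ ζ.re → ((b : ℂ) + ζ) ≠ 0 ∧
      ((b : ℂ) + ζ)⁻¹ ∈ {z : ℂ | 1 / R < (1 / z).re} := by
    intro ζ hζ
    have hre : b ≤ ((b : ℂ) + ζ).re := by
      rw [Complex.add_re, Complex.ofReal_re]; linarith
    have hne : ((b : ℂ) + ζ) ≠ 0 := by
      intro h0; rw [h0] at hre; simp only [Complex.zero_re] at hre; linarith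
    exact ⟨hne, inv_mem hR0 (lt_of_lt_of_le hb1 hre)⟩
  have hGd : DiffContOnCl ℂ G {z : ℂ | 0 < z.re} := by
    constructor
    · rw [hG_def]
      intro ζ hζ
      have hζ' : (0:ℝ) < ζ.re := hζ
      obtain ⟨hne, hmemU⟩ := hmem ζ hζ'.le
      have h2 : DifferentiableAt ℂ (fun w : ℂ => ((b : ℂ) + w)⁻¹) ζ :=
        ((differentiableAt_const _).add differentiableAt_id).inv hne
      have h3 : DifferentiableAt ℂ D (((b : ℂ) + ζ)⁻¹) :=
        (hD _ hmemU).differentiableAt (hUopen.mem_nhds hmemU)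
      exact (h3.comp ζ h2).differentiableWithinAt
    · refine ContinuousOn.mono ?_ (by rw [closure_setOf_lt_re])
      rw [hG_def]
      intro ζ hζ
      have hζ' : (0:ℝ) ≤ ζ.re := hζ
      obtain ⟨hne, hmemU⟩ := hmem ζ hζ'
      have h2 : ContinuousAt (fun w : ℂ => ((b : ℂ) + w)⁻¹) ζ :=
        (continuousAt_const.add continuousAt_id).inv₀ hne
      have h3 : ContinuousAt D (((b : ℂ) + ζ)⁻¹) :=
        ((hD _ hmemU).differentiableAt (hUopen.mem_nhds hmemU)).continuousAt
      exact (ContinuousAt.comp (x := ζ) (g := D)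
        (f := fun w : ℂ => ((b : ℂ) + w)⁻¹) h3 h2).continuousWithinAt
  have hGexp : ∃ cc < (2:ℝ), ∃ B,
      G =O[Bornology.cobounded ℂ ⊓ Filter.principal {z : ℂ | 0 < z.re}]
      fun ζ => Real.exp (B * ‖ζ‖ ^ cc) := by
    refine ⟨1, one_lt_two, 0, Asymptotics.IsBigO.of_bound K ?_⟩
    rw [Filter.eventually_inf_principal]
    refine Filter.Eventually.of_forall ?_
    intro ζ hζ
    have hζ' : (0:ℝ) < ζ.re := hζ
    obtain ⟨hne, hmemU⟩ := hmem ζ hζ'.le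
    rw [hG_def]
    simp only [zero_mul, Real.exp_zero, norm_one, mul_one]
    exact bound_zero hK hbd hmemU
  have hGkey : ∀ n : ℕ, ∀ u : ℝ, 0 ≤ u →
      ‖G (u : ℂ)‖ ≤ 2 * K * Real.exp (δ * b) * Real.exp (-(δ + n) * u) := by
    intro n u hu
    have hc : 1 / (4 * σ) ≤ δ + n := by
      rw [hδ_def]
      have : (0:ℝ) ≤ n := Nat.cast_nonneg n
      linarith
    have h := keybound hR hσ hK hD hbd hb1 hc hu
    simp only [hG_def]
    have e1 : ((b : ℂ) + (u : ℂ)) = ((b + u : ℝ) : ℂ) := by push_cast; ring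
    rw [e1]
    rw [← hδ_def] at h
    exact h
  have hGre : Asymptotics.SuperpolynomialDecay Filter.atTop Real.exp
      (fun u : ℝ => ‖G (u : ℂ)‖) := by
    intro n
    have hg0 : Filter.Tendsto (fun u : ℝ => 2 * K * Real.exp (δ * b) *
        Real.exp (-(δ * u))) Filter.atTop (nhds 0) := by
      have h1 : Filter.Tendsto (fun u : ℝ => δ * u) Filter.atTop Filter.atTop :=
        Filter.Tendsto.const_mul_atTop hδ Filter.tendsto_id
      have h2 : Filter.Tendsto (fun u : ℝ => -(δ * u)) Filter.atTop Filter.atBot :=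
        tendsto_neg_atTop_atBot.comp h1
      have h3 := (Real.tendsto_exp_atBot.comp h2).const_mul (2 * K * Real.exp (δ * b))
      rw [mul_zero] at h3
      exact h3
    apply squeeze_zero' (Filter.Eventually.of_forall fun u => by positivity) ?_ hg0
    filter_upwards [Filter.eventually_ge_atTop (0:ℝ)] with u hu
    calc Real.exp u ^ n * ‖G (u : ℂ)‖
        ≤ Real.exp u ^ n * (2 * K * Real.exp (δ * b) * Real.exp (-(δ + n) * u)) :=
      mul_le_mul_of_nonneg_left (hGkey n u hu) (by positivity)
    _ = 2 * K * Real.exp (δ * b) * (Real.exp ((n:ℝ) * u) * Real.exp (-(δ + n) * u)) := by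
        rw [← Real.exp_nat_mul]; ring
    _ = 2 * K * Real.exp (δ * b) * Real.exp (-(δ * u)) := by
        rw [← Real.exp_add]
        congr 1
        ring
  have him : ∃ C, ∀ y : ℝ, ‖G ((y : ℂ) * Complex.I)‖ ≤ C := by
    refine ⟨K, fun y => ?_⟩
    have hre : (0:ℝ) ≤ ((y : ℂ) * Complex.I).re := by simp
    obtain ⟨hne, hmemU⟩ := hmem _ hre
    rw [hG_def]
    exact bound_zero hK hbd hmemU
  have hzero := PhragmenLindelof.eq_zero_on_right_half_plane_of_superexponential_decay
    hGd hGexp hGre him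
  have hζz : (1 / z - (b : ℂ)).re ∈ Set.Ici (0:ℝ) := by
    rw [Complex.sub_re, Complex.ofReal_re]
    simp only [Set.mem_Ici]
    linarith
  have hmemhalf : (1 / z - (b : ℂ)) ∈ {w : ℂ | 0 ≤ w.re} := by
    simp only [Set.mem_setOf_eq, Complex.sub_re, Complex.ofReal_re]
    linarith
  have h0 := hzero hmemhalf
  rw [hG_def] at h0
  simp only [Pi.zero_apply] at h0
  have e1 : ((b : ℂ) + (1 / z - (b : ℂ))) = 1 / z := by ring
  rw [e1, one_div, inv_inv] at h0
  exact h0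

end Stmt12Aux

/-- Stability of Borel summation: if `A` and the family `A_τ` are analytic on
`C_R = {z : Re z⁻¹ > R⁻¹}` with asymptotic expansions whose coefficients and remainders obey
the uniform factorial bounds `‖a_m‖, ‖a_{τ,m}‖ ≤ ν σ^m m!` and
`‖Rem_M z‖, ‖Rem_{τ,M} z‖ ≤ ν σ^M M! ‖z‖^M`, and if `a_{τ,m} → a_m` for every `m` as
`τ → ∞`, then `A_τ z → A z` for every `z ∈ C_R`. -/
theorem stmt12 (R σ ν : ℝ) (hR : 1 ≤ R) (hσ : 1 ≤ σ) (hν : 0 < ν)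
    (A : ℂ → ℂ) (Aτ : ℝ → ℂ → ℂ) (a : ℕ → ℂ) (aτ : ℝ → ℕ → ℂ)
    (Rem : ℕ → ℂ → ℂ) (Remτ : ℝ → ℕ → ℂ → ℂ)
    (hA : DifferentiableOn ℂ A {z : ℂ | 1 / R < (1 / z).re})
    (hAτ : ∀ τ : ℝ, 0 < τ → DifferentiableOn ℂ (Aτ τ) {z : ℂ | 1 / R < (1 / z).re})
    (hexp : ∀ M : ℕ, ∀ z ∈ {z : ℂ | 1 / R < (1 / z).re},
      A z = ∑ m ∈ Finset.range M, a m * z ^ m + Rem M z)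
    (hexpτ : ∀ τ : ℝ, 0 < τ → ∀ M : ℕ, ∀ z ∈ {z : ℂ | 1 / R < (1 / z).re},
      Aτ τ z = ∑ m ∈ Finset.range M, aτ τ m * z ^ m + Remτ τ M z)
    (ha : ∀ m : ℕ, ‖a m‖ ≤ ν * σ ^ m * m.factorial)
    (haτ : ∀ τ : ℝ, 0 < τ → ∀ m : ℕ, ‖aτ τ m‖ ≤ ν * σ ^ m * m.factorial)
    (hRem : ∀ M : ℕ, ∀ z ∈ {z : ℂ | 1 / R < (1 / z).re},
      ‖Rem M z‖ ≤ ν * σ ^ M * M.factorial * ‖z‖ ^ M)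
    (hRemτ : ∀ τ : ℝ, 0 < τ → ∀ M : ℕ, ∀ z ∈ {z : ℂ | 1 / R < (1 / z).re},
      ‖Remτ τ M z‖ ≤ ν * σ ^ M * M.factorial * ‖z‖ ^ M)
    (hcoef : ∀ m : ℕ, Tendsto (fun τ : ℝ => aτ τ m) atTop (nhds (a m))) :
    ∀ z ∈ {z : ℂ | 1 / R < (1 / z).re},
      Tendsto (fun τ : ℝ => Aτ τ z) atTop (nhds (A z)) := by
  intro z₀ hz₀
  have hR0 : 0 < R := lt_of_lt_of_le one_pos hR
  have hσ0 : 0 < σ := lt_of_lt_of_le one_pos hσ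
  have hSopen : IsOpen {z : ℂ | 1 / R < (1 / z).re} := by
    rw [Stmt12Aux.U_eq_ball hR0]; exact Metric.isOpen_ball
  obtain ⟨B, hB_def⟩ : ∃ B : ℝ, B = ν + ν * σ * R := ⟨_, rfl⟩
  have hB0 : 0 < B := by rw [hB_def]; positivity
  have hAbd : ∀ τ : ℝ, 0 < τ → ∀ z ∈ {z : ℂ | 1 / R < (1 / z).re}, ‖Aτ τ z‖ ≤ B := by
    intro τ hτ z hz
    have he := hexpτ τ hτ 1 z hz
    have h1 : ‖aτ τ 0‖ ≤ ν := by
      have := haτ τ hτ 0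
      simpa using this
    have h2 : ‖Remτ τ 1 z‖ ≤ ν * σ * ‖z‖ := by
      have := hRemτ τ hτ 1 z hz
      simpa using this
    have hzR : ‖z‖ < R := Stmt12Aux.norm_lt_of_mem hR0 hz
    rw [hB_def, he, Finset.sum_range_one]
    calc ‖aτ τ 0 * z ^ 0 + Remτ τ 1 z‖ ≤ ‖aτ τ 0 * z ^ 0‖ + ‖Remτ τ 1 z‖ := norm_add_le _ _
    _ = ‖aτ τ 0‖ + ‖Remτ τ 1 z‖ := by rw [pow_zero, mul_one]
    _ ≤ ν + ν * σ * ‖z‖ := add_le_add h1 h2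
    _ ≤ ν + ν * σ * R := by
        have h3 : ν * σ * ‖z‖ ≤ ν * σ * R :=
          mul_le_mul_of_nonneg_left hzR.le (by positivity)
        linarith
  rw [Filter.tendsto_iff_ultrafilter]
  intro 𝒰 h𝒰
  have hpos : ∀ᶠ τ in (𝒰 : Filter ℝ), 0 < τ := h𝒰 (Filter.eventually_gt_atTop 0)
  -- pointwise ultrafilter limits exist
  have hlim : ∀ z ∈ {z : ℂ | 1 / R < (1 / z).re},
      ∃ w : ℂ, Tendsto (fun τ => Aτ τ z) (𝒰 : Filter ℝ) (nhds w) := by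
    intro z hz
    have hsub : (𝒰.map (fun τ => Aτ τ z) : Filter ℂ) ≤
        Filter.principal (Metric.closedBall 0 B) := by
      rw [Ultrafilter.coe_map, Filter.le_principal_iff, Filter.mem_map]
      filter_upwards [hpos] with τ hτ
      simp only [Set.mem_preimage, Metric.mem_closedBall, dist_zero_right]
      exact hAbd τ hτ z hz
    obtain ⟨w, -, hw⟩ := (isCompact_closedBall (0:ℂ) B).ultrafilter_le_nhds
      (𝒰.map (fun τ => Aτ τ z)) hsub
    rw [Ultrafilter.coe_map] at hw
    exact ⟨w, hw⟩
  choose! g hg using hlim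
  -- coefficient limits
  have hca : ∀ m : ℕ, Tendsto (fun τ => aτ τ m) (𝒰 : Filter ℝ) (nhds (a m)) :=
    fun m => (hcoef m).mono_left h𝒰
  have hsum : ∀ (M : ℕ) (z : ℂ), Tendsto (fun τ => ∑ m ∈ Finset.range M, aτ τ m * z ^ m)
      (𝒰 : Filter ℝ) (nhds (∑ m ∈ Finset.range M, a m * z ^ m)) := by
    intro M z
    exact tendsto_finset_sum _ fun m _ => (hca m).mul_const _
  -- remainder bounds pass to the limit
  have hgRem : ∀ M : ℕ, ∀ z ∈ {z : ℂ | 1 / R < (1 / z).re},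
      ‖g z - ∑ m ∈ Finset.range M, a m * z ^ m‖ ≤ ν * σ ^ M * M.factorial * ‖z‖ ^ M := by
    intro M z hz
    have ht : Tendsto (fun τ => Aτ τ z - ∑ m ∈ Finset.range M, aτ τ m * z ^ m)
        (𝒰 : Filter ℝ) (nhds (g z - ∑ m ∈ Finset.range M, a m * z ^ m)) :=
      (hg z hz).sub (hsum M z)
    have heq : ∀ᶠ τ in (𝒰 : Filter ℝ),
        Aτ τ z - ∑ m ∈ Finset.range M, aτ τ m * z ^ m = Remτ τ M z := by
      filter_upwards [hpos] with τ hτ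
      rw [hexpτ τ hτ M z hz]; ring
    have ht2 : Tendsto (fun τ => Remτ τ M z) (𝒰 : Filter ℝ)
        (nhds (g z - ∑ m ∈ Finset.range M, a m * z ^ m)) := ht.congr' heq
    exact le_of_tendsto ht2.norm (hpos.mono fun τ hτ => hRemτ τ hτ M z hz)
  have hDbd : ∀ M : ℕ, ∀ z ∈ {z : ℂ | 1 / R < (1 / z).re},
      ‖g z - A z‖ ≤ (2 * ν) * σ ^ M * M.factorial * ‖z‖ ^ M := by
    intro M z hz
    have h1 := hgRem M z hz
    have heq : A z - ∑ m ∈ Finset.range M, a m * z ^ m = Rem M z := by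
      rw [hexp M z hz]; ring
    have h2 : ‖A z - ∑ m ∈ Finset.range M, a m * z ^ m‖ ≤
        ν * σ ^ M * M.factorial * ‖z‖ ^ M := by
      rw [heq]; exact hRem M z hz
    calc ‖g z - A z‖ = ‖(g z - ∑ m ∈ Finset.range M, a m * z ^ m) -
        (A z - ∑ m ∈ Finset.range M, a m * z ^ m)‖ := by congr 1; ring
    _ ≤ ‖g z - ∑ m ∈ Finset.range M, a m * z ^ m‖ +
        ‖A z - ∑ m ∈ Finset.range M, a m * z ^ m‖ := norm_sub_le _ _
    _ ≤ (2 * ν) * σ ^ M * M.factorial * ‖z‖ ^ M := by linarith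
  -- uniform local Lipschitz bounds
  have hLip : ∀ z₁ ∈ {z : ℂ | 1 / R < (1 / z).re}, ∃ r > 0, ∃ L : ℝ, 0 ≤ L ∧
      Metric.ball z₁ r ⊆ {z : ℂ | 1 / R < (1 / z).re} ∧
      ∀ τ : ℝ, 0 < τ → ∀ z ∈ Metric.ball z₁ r, ‖Aτ τ z - Aτ τ z₁‖ ≤ L * ‖z - z₁‖ := by
    intro z₁ hz₁
    obtain ⟨r₃, hr₃, hball⟩ := Metric.isOpen_iff.1 hSopen z₁ hz₁
    have hr : 0 < r₃ / 3 := by positivity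
    refine ⟨r₃ / 3, hr, B / (r₃ / 3), by positivity, ?_, ?_⟩
    · exact Set.Subset.trans (Metric.ball_subset_ball (by linarith)) hball
    · intro τ hτ z hz
      have hderiv : ∀ w ∈ Metric.ball z₁ (r₃ / 3), ‖deriv (Aτ τ) w‖ ≤ B / (r₃ / 3) := by
        intro w hw
        have hsub : Metric.closedBall w (r₃ / 3) ⊆ {z : ℂ | 1 / R < (1 / z).re} := by
          intro v hv
          apply hball
          rw [Metric.mem_ball]
          have hv' : dist v w ≤ r₃ / 3 := Metric.mem_closedBall.1 hv
          have hw' : dist w z₁ < r₃ / 3 := Metric.mem_ball.1 hw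
          calc dist v z₁ ≤ dist v w + dist w z₁ := dist_triangle _ _ _
          _ < r₃ := by linarith
        apply Complex.norm_deriv_le_of_forall_mem_sphere_norm_le hr
        · constructor
          · exact (hAτ τ hτ).mono fun v hv => hsub (Metric.ball_subset_closedBall hv)
          · refine ((hAτ τ hτ).continuousOn).mono ?_
            rw [closure_ball w hr.ne']
            exact hsub
        · intro v hv
          exact hAbd τ hτ v (hsub (Metric.sphere_subset_closedBall hv))
      have hdiff : ∀ w ∈ Metric.ball z₁ (r₃ / 3), DifferentiableAt ℂ (Aτ τ) w := by
        intro w hw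
        have hwS : w ∈ {z : ℂ | 1 / R < (1 / z).re} :=
          hball (Metric.ball_subset_ball (by linarith) hw)
        exact (hAτ τ hτ).differentiableAt (hSopen.mem_nhds hwS)
      exact Convex.norm_image_sub_le_of_norm_deriv_le hdiff hderiv
        (convex_ball z₁ (r₃ / 3)) (Metric.mem_ball_self hr) hz
  -- locally uniform convergence
  have hTLU : TendstoLocallyUniformlyOn (fun τ => Aτ τ) g (𝒰 : Filter ℝ)
      {z : ℂ | 1 / R < (1 / z).re} := by
    rw [Metric.tendstoLocallyUniformlyOn_iff]
    intro ε hε x hx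
    obtain ⟨r, hr, L, hL, hballS, hlip⟩ := hLip x hx
    obtain ⟨ρ, hρ_def⟩ : ∃ ρ : ℝ, ρ = min r (ε / (3 * (L + 1))) := ⟨_, rfl⟩
    have hρ0 : 0 < ρ := by rw [hρ_def]; exact lt_min hr (by positivity)
    have hρr : ρ ≤ r := by rw [hρ_def]; exact min_le_left _ _
    have hρε : ρ ≤ ε / (3 * (L + 1)) := by rw [hρ_def]; exact min_le_right _ _
    refine ⟨Metric.ball x ρ ∩ {z : ℂ | 1 / R < (1 / z).re}, ?_, ?_⟩
    · exact Filter.inter_mem (mem_nhdsWithin_of_mem_nhds (Metric.ball_mem_nhds x hρ0))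
        self_mem_nhdsWithin
    · have hev : ∀ᶠ τ in (𝒰 : Filter ℝ), dist (Aτ τ x) (g x) < ε / 3 :=
        (Metric.tendsto_nhds.1 (hg x hx)) (ε / 3) (by positivity)
      have hgl : ∀ y, y ∈ Metric.ball x r → y ∈ {z : ℂ | 1 / R < (1 / z).re} →
          ‖g y - g x‖ ≤ L * ‖y - x‖ := by
        intro y hy1 hy2
        exact le_of_tendsto ((hg y hy2).sub (hg x hx)).norm
          (hpos.mono fun τ hτ => hlip τ hτ y hy1)
      filter_upwards [hpos, hev] with τ hτ hτε
      intro y hy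
      obtain ⟨hy1, hy2⟩ := hy
      have hyr : y ∈ Metric.ball x r := Metric.ball_subset_ball hρr hy1
      have d1 : ‖g y - g x‖ ≤ L * ‖y - x‖ := hgl y hyr hy2
      have d2 : ‖Aτ τ y - Aτ τ x‖ ≤ L * ‖y - x‖ := hlip τ hτ y hyr
      have hyx : ‖y - x‖ < ρ := by
        rw [← dist_eq_norm]
        exact Metric.mem_ball.1 hy1
      have k3 : L * (ε / (3 * (L + 1))) ≤ ε / 3 := by
        rw [← mul_div_assoc, div_le_div_iff₀ (by positivity) (by norm_num : (0:ℝ) < 3)]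
        nlinarith
      have k1 : L * ‖y - x‖ ≤ ε / 3 := by
        have : L * ‖y - x‖ ≤ L * (ε / (3 * (L + 1))) := by
          apply mul_le_mul_of_nonneg_left _ hL
          linarith
        linarith
      have tri : dist (g y) (Aτ τ y) ≤
          dist (g y) (g x) + dist (g x) (Aτ τ x) + dist (Aτ τ x) (Aτ τ y) :=
        dist_triangle4 _ _ _ _
      have e1 : dist (g y) (g x) = ‖g y - g x‖ := dist_eq_norm _ _
      have e2 : dist (Aτ τ x) (Aτ τ y) = ‖Aτ τ y - Aτ τ x‖ := by
        rw [dist_comm]; exact dist_eq_norm _ _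
      have e3 : dist (g x) (Aτ τ x) = dist (Aτ τ x) (g x) := dist_comm _ _
      rw [e1, e2, e3] at tri
      linarith
  have hgdiff : DifferentiableOn ℂ g {z : ℂ | 1 / R < (1 / z).re} :=
    hTLU.differentiableOn (hpos.mono fun τ hτ => hAτ τ hτ) hSopen
  -- apply the uniqueness theorem to g - A
  have hDdiff : DifferentiableOn ℂ (fun z => g z - A z) {z : ℂ | 1 / R < (1 / z).re} :=
    hgdiff.sub hA
  have hzero := Stmt12Aux.watson hR hσ (by positivity : (0:ℝ) < 2 * ν) hDdiff hDbd z₀ hz₀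
  have hgA : g z₀ = A z₀ := sub_eq_zero.1 hzero
  have := hg z₀ hz₀
  rwa [hgA] at this
end

section
/- (Momentum-space Green function bound) For d ≤ 3, κ > 0, τ > 0, t ∈ (0,1), define f_τ(p) = (1/τ)·e^{(1-t)(p²+κ)/τ}/(e^{(p²+κ)/τ} - 1) for p ∈ ℝ^d. Then |f_τ(p) - 1/(p²+κ)| ≤ C/(p²+κ) for a constant C independent of τ, p, and moreover ∫_{ℝ^d} (f_τ(p) - 1/(p²+κ))² dp → 0 as τ → ∞ by dominated convergence, since f_τ(p) → 1/(p²+κ) pointwise. -/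
open Filter MeasureTheory

private lemma key_ineq {s x : ℝ} (hs0 : 0 ≤ s) (hs1 : s < 1) (hx : 0 < x) :
    (1 - s) * x * Real.exp (s * x) ≤ Real.exp x - 1 := by
  have h1 : (1 - s) * x + 1 ≤ Real.exp ((1 - s) * x) := Real.add_one_le_exp _
  have h2 : 1 ≤ Real.exp (s * x) := Real.one_le_exp (by positivity)
  have h3 : Real.exp (s * x) * Real.exp ((1 - s) * x) = Real.exp x := by
    rw [← Real.exp_add]; ring_nf
  nlinarith [Real.exp_pos (s * x), mul_le_mul_of_nonneg_left h1 (Real.exp_pos (s * x)).le]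

private lemma exp_sub_one_pos {x : ℝ} (hx : 0 < x) : 0 < Real.exp x - 1 := by
  have := Real.exp_lt_exp.mpr hx
  simp only [Real.exp_zero] at this
  linarith [this]

private lemma g_pos {s x : ℝ} (hx : 0 < x) :
    0 < x * Real.exp (s * x) / (Real.exp x - 1) := by
  exact div_pos (by positivity) (exp_sub_one_pos hx)

private lemma g_le {s x : ℝ} (hs0 : 0 ≤ s) (hs1 : s < 1) (hx : 0 < x) :
    x * Real.exp (s * x) / (Real.exp x - 1) ≤ 1 / (1 - s) := by
  rw [div_le_div_iff₀ (exp_sub_one_pos hx) (by linarith)]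
  nlinarith [key_ineq hs0 hs1 hx]

private lemma g_tendsto (s : ℝ) :
    Tendsto (fun x : ℝ => x * Real.exp (s * x) / (Real.exp x - 1)) (nhdsWithin 0 (Set.Ioi 0))
      (nhds 1) := by
  have hslope : Tendsto (fun x : ℝ => (Real.exp x - 1) / x) (nhdsWithin 0 {(0:ℝ)}ᶜ) (nhds 1) := by
    have h := Real.hasDerivAt_exp 0
    rw [hasDerivAt_iff_tendsto_slope] at h
    simpa [slope_fun_def, Real.exp_zero, div_eq_inv_mul] using h
  have hslope' : Tendsto (fun x : ℝ => (Real.exp x - 1) / x) (nhdsWithin 0 (Set.Ioi 0)) (nhds 1) :=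
    hslope.mono_left (nhdsWithin_mono _ (fun x hx => ne_of_gt hx))
  have hnum : Tendsto (fun x : ℝ => Real.exp (s * x)) (nhdsWithin 0 (Set.Ioi 0)) (nhds 1) := by
    have : Continuous fun x : ℝ => Real.exp (s * x) := by continuity
    have h0 := this.tendsto 0
    simp only [mul_zero, Real.exp_zero] at h0
    exact h0.mono_left nhdsWithin_le_nhds
  have hdiv := hnum.div hslope' one_ne_zero
  simp only [div_one] at hdiv
  refine hdiv.congr' ?_
  filter_upwards [self_mem_nhdsWithin] with x hx
  have hx0 : (x:ℝ) ≠ 0 := ne_of_gt hx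
  have hden : Real.exp x - 1 ≠ 0 := ne_of_gt (exp_sub_one_pos hx)
  simp only [Pi.div_apply]
  field_simp

private lemma f_eq {s τ A : ℝ} (hτ : 0 < τ) (hA : 0 < A) :
    (1 / τ) * Real.exp (s * A / τ) / (Real.exp (A / τ) - 1)
      = (1 / A) * ((A / τ) * Real.exp (s * (A / τ)) / (Real.exp (A / τ) - 1)) := by
  have hden : Real.exp (A / τ) - 1 ≠ 0 := ne_of_gt (exp_sub_one_pos (div_pos hA hτ))
  rw [mul_div_assoc']
  field_simp

private lemma f_tendsto {s A : ℝ} (hA : 0 < A) :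
    Tendsto (fun τ : ℝ => (1 / τ) * Real.exp (s * A / τ) / (Real.exp (A / τ) - 1))
      atTop (nhds (1 / A)) := by
  have hxτ : Tendsto (fun τ : ℝ => A / τ) atTop (nhdsWithin 0 (Set.Ioi 0)) := by
    apply tendsto_nhdsWithin_of_tendsto_nhds_of_eventually_within
    · simpa [div_eq_mul_inv] using (tendsto_inv_atTop_zero).const_mul A
    · filter_upwards [eventually_gt_atTop (0:ℝ)] with τ hτ
      exact div_pos hA hτ
  have hcomp := (g_tendsto s).comp hxτ
  have h2 : Tendsto (fun τ : ℝ =>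
      (1 / A) * ((A / τ) * Real.exp (s * (A / τ)) / (Real.exp (A / τ) - 1)))
      atTop (nhds ((1 / A) * 1)) := hcomp.const_mul (1 / A)
  rw [mul_one] at h2
  refine h2.congr' ?_
  filter_upwards [eventually_gt_atTop (0:ℝ)] with τ hτ
  exact (f_eq hτ hA).symm

private lemma f_bound {s τ A : ℝ} (hs0 : 0 ≤ s) (hs1 : s < 1) (hτ : 0 < τ) (hA : 0 < A) :
    |(1 / τ) * Real.exp (s * A / τ) / (Real.exp (A / τ) - 1) - 1 / A|
      ≤ (1 / (1 - s) + 1) / A := by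
  rw [f_eq hτ hA]
  set x := A / τ with hxdef
  have hx : 0 < x := div_pos hA hτ
  set g := x * Real.exp (s * x) / (Real.exp x - 1) with hgdef
  have hg0 : 0 < g := g_pos hx
  have hg1 : g ≤ 1 / (1 - s) := g_le hs0 hs1 hx
  have heq : (1 / A) * g - 1 / A = (g - 1) / A := by ring
  rw [heq, abs_div, abs_of_pos hA]
  gcongr
  rw [abs_le]
  constructor <;> nlinarith [one_div_pos.mpr (show (0:ℝ) < 1 - s by linarith)]

private lemma integrable_bound (d : ℕ) (hd : d ≤ 3) {κ : ℝ} (hκ : 0 < κ) (K : ℝ) :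
    Integrable (fun p : EuclideanSpace ℝ (Fin d) => K / (‖p‖ ^ 2 + κ) ^ 2) := by
  set m := min κ 1 with hmdef
  have hm : 0 < m := lt_min hκ one_pos
  have hm1 : m ≤ 1 := min_le_right _ _
  have hmκ : m ≤ κ := min_le_left _ _
  have hAp : ∀ p : EuclideanSpace ℝ (Fin d), 0 < ‖p‖ ^ 2 + κ := fun p => by positivity
  have hint : Integrable (fun p : EuclideanSpace ℝ (Fin d) =>
      |K| * (2 / m) ^ 2 * (1 + ‖p‖) ^ (-(4:ℝ))) := by
    apply Integrable.const_mul
    apply integrable_one_add_norm (μ := volume)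
    rw [finrank_euclideanSpace_fin]
    exact_mod_cast lt_of_le_of_lt hd (by norm_num)
  apply hint.mono'
  · have hcont : Continuous fun p : EuclideanSpace ℝ (Fin d) => K / (‖p‖ ^ 2 + κ) ^ 2 := by
      apply continuous_const.div (by continuity)
      exact fun p => by positivity
    exact hcont.aestronglyMeasurable
  · refine ae_of_all _ fun p => ?_
    set x := ‖p‖ with hxdef
    have hx0 : 0 ≤ x := norm_nonneg _
    have hrw : (1 + x) ^ (-(4:ℝ)) = ((1 + x) ^ (4:ℕ))⁻¹ := by
      rw [Real.rpow_neg (by positivity), ← Real.rpow_natCast]; norm_num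
    have hAlow : m / 2 * (1 + x) ^ 2 ≤ x ^ 2 + κ := by nlinarith [sq_nonneg (1 - x)]
    have hB : (0:ℝ) < m / 2 * (1 + x) ^ 2 := by positivity
    have hmne : m ≠ 0 := ne_of_gt hm
    have h1x : (1 + x) ≠ 0 := by positivity
    calc ‖K / (x ^ 2 + κ) ^ 2‖ = |K| / (x ^ 2 + κ) ^ 2 := by
            rw [Real.norm_eq_abs, abs_div,
              abs_of_pos (show (0:ℝ) < (x ^ 2 + κ) ^ 2 by positivity)]
      _ ≤ |K| / (m / 2 * (1 + x) ^ 2) ^ 2 := by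
            rw [div_eq_mul_inv, div_eq_mul_inv]
            refine mul_le_mul_of_nonneg_left ?_ (abs_nonneg K)
            refine inv_anti₀ (by positivity) ?_
            nlinarith [hB.le]
      _ = |K| * (2 / m) ^ 2 * (1 + x) ^ (-(4:ℝ)) := by
            rw [hrw]
            field_simp

/-- Momentum-space bound on the translation-invariant quantum Green function: for `d ≤ 3`,
`κ > 0` and fixed `t ∈ (0,1)`, the symbol
`f_τ(p) = (1/τ) e^{(1-t)(p²+κ)/τ}/(e^{(p²+κ)/τ} - 1)` satisfies
`|f_τ(p) - 1/(p²+κ)| ≤ C/(p²+κ)` with `C` independent of `τ > 0` and `p`; moreover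
`f_τ(p) → 1/(p²+κ)` pointwise and `∫ (f_τ(p) - 1/(p²+κ))² dp → 0` as `τ → ∞`. -/
theorem stmt19 (d : ℕ) (hd : d ≤ 3) (κ : ℝ) (hκ : 0 < κ)
    (t : ℝ) (ht : t ∈ Set.Ioo (0 : ℝ) 1) :
    (∃ C : ℝ, 0 < C ∧ ∀ τ : ℝ, 0 < τ → ∀ p : EuclideanSpace ℝ (Fin d),
      |(1 / τ) * Real.exp ((1 - t) * (‖p‖ ^ 2 + κ) / τ) /
          (Real.exp ((‖p‖ ^ 2 + κ) / τ) - 1) - 1 / (‖p‖ ^ 2 + κ)|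
        ≤ C / (‖p‖ ^ 2 + κ)) ∧
    (∀ p : EuclideanSpace ℝ (Fin d),
      Tendsto (fun τ : ℝ =>
          (1 / τ) * Real.exp ((1 - t) * (‖p‖ ^ 2 + κ) / τ) /
            (Real.exp ((‖p‖ ^ 2 + κ) / τ) - 1))
        atTop (nhds (1 / (‖p‖ ^ 2 + κ)))) ∧
    Tendsto (fun τ : ℝ =>
        ∫ p : EuclideanSpace ℝ (Fin d),
          ((1 / τ) * Real.exp ((1 - t) * (‖p‖ ^ 2 + κ) / τ) /
              (Real.exp ((‖p‖ ^ 2 + κ) / τ) - 1) - 1 / (‖p‖ ^ 2 + κ)) ^ 2)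
      atTop (nhds 0) := by
  obtain ⟨ht0, ht1⟩ := ht
  have hs0 : (0:ℝ) ≤ 1 - t := by linarith
  have hs1 : (1:ℝ) - t < 1 := by linarith
  have hA : ∀ p : EuclideanSpace ℝ (Fin d), 0 < ‖p‖ ^ 2 + κ := fun p => by positivity
  have hCpos : (0:ℝ) < 1 / t + 1 := by positivity
  have hbd : ∀ τ : ℝ, 0 < τ → ∀ p : EuclideanSpace ℝ (Fin d),
      |(1 / τ) * Real.exp ((1 - t) * (‖p‖ ^ 2 + κ) / τ) /
          (Real.exp ((‖p‖ ^ 2 + κ) / τ) - 1) - 1 / (‖p‖ ^ 2 + κ)|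
        ≤ (1 / t + 1) / (‖p‖ ^ 2 + κ) := by
    intro τ hτ p
    have h := f_bound (s := 1 - t) hs0 hs1 hτ (hA p)
    rwa [show (1:ℝ) - (1 - t) = t by ring] at h
  refine ⟨⟨1 / t + 1, hCpos, hbd⟩, fun p => f_tendsto (hA p), ?_⟩
  have hmain := tendsto_integral_filter_of_dominated_convergence
    (μ := (volume : Measure (EuclideanSpace ℝ (Fin d)))) (l := atTop)
    (F := fun τ p => ((1 / τ) * Real.exp ((1 - t) * (‖p‖ ^ 2 + κ) / τ) /
        (Real.exp ((‖p‖ ^ 2 + κ) / τ) - 1) - 1 / (‖p‖ ^ 2 + κ)) ^ 2)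
    (f := fun _ => (0:ℝ))
    (bound := fun p => (1 / t + 1) ^ 2 / (‖p‖ ^ 2 + κ) ^ 2)
    ?_ ?_ (integrable_bound d hd hκ _) ?_
  · simpa using hmain
  · filter_upwards [eventually_gt_atTop (0:ℝ)] with τ hτ
    have h2 : Continuous fun p : EuclideanSpace ℝ (Fin d) =>
        Real.exp ((‖p‖ ^ 2 + κ) / τ) - 1 := by continuity
    have h1 : Continuous fun p : EuclideanSpace ℝ (Fin d) =>
        (1 / τ) * Real.exp ((1 - t) * (‖p‖ ^ 2 + κ) / τ) := by continuity
    have h3 := h1.div h2 (fun p => ne_of_gt (exp_sub_one_pos (div_pos (hA p) hτ)))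
    have h4 : Continuous fun p : EuclideanSpace ℝ (Fin d) => 1 / (‖p‖ ^ 2 + κ) :=
      continuous_const.div (by continuity) (fun p => ne_of_gt (hA p))
    exact ((h3.sub h4).pow 2).aestronglyMeasurable
  · filter_upwards [eventually_gt_atTop (0:ℝ)] with τ hτ
    refine ae_of_all _ fun p => ?_
    rw [Real.norm_eq_abs, abs_of_nonneg (sq_nonneg _)]
    have h := abs_le.mp (hbd τ hτ p)
    have h2 := sq_le_sq' h.1 h.2
    rwa [div_pow] at h2
  · refine ae_of_all _ fun p => ?_
    have h := (f_tendsto (s := 1 - t) (hA p)).sub_const (1 / (‖p‖ ^ 2 + κ))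
    rw [sub_self] at h
    simpa using h.pow 2
end
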